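/- arXiv:1812.03498 — 6 statements merged into one kernel-verified Lean document; each statement's English description precedes it below -/
import Mathlib

section
/- Let R be a ring, n a nonnegative integer, and G, M R-modules. If Ext^i_R(G,M) = 0 for all i ≥ n+1, then Ext^i_R(W,M) = 0 for all i ≥ n+1 and every module W in ^⊥(G^{⊥∞}). -/
open CategoryTheory Opposite

noncomputable section

/-- The Ext group `Ext^n_R(M, N)` (as a `ℤ`-module). -/
def extMod (R : Type) [Ring R] (n : ℕ) (M N : ModuleCat.{0} R) : ModuleCat ℤ :=
  ((Ext ℤ (ModuleCat.{0} R) n).obj (op M)).obj N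

variable (R : Type) [Ring R]

/-- `Ext^n_R(M,N) = 0`. -/
def extVanish (n : ℕ) (M N : ModuleCat.{0} R) : Prop :=
  Subsingleton (extMod R n M N)

/-- `M^{⊥∞} = {X | Ext^i(M,X) = 0 for all i ≥ 1}`. -/
def perpInf (M : ModuleCat.{0} R) : Set (ModuleCat.{0} R) :=
  {X | ∀ i : ℕ, 1 ≤ i → extVanish R i M X}

/-- `^⊥𝒞 = {W | Ext^1(W,C) = 0 for all C ∈ 𝒞}`. -/
def leftPerp (𝒞 : Set (ModuleCat.{0} R)) : Set (ModuleCat.{0} R) :=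
  {W | ∀ C ∈ 𝒞, extVanish R 1 W C}

/-- `𝒞^⊥ = {X | Ext^1(C,X) = 0 for all C ∈ 𝒞}`. -/
def rightPerp (𝒞 : Set (ModuleCat.{0} R)) : Set (ModuleCat.{0} R) :=
  {X | ∀ C ∈ 𝒞, extVanish R 1 C X}

/-- Projective dimension at most `n`, via vanishing of `Ext^i` for `i ≥ n+1`. -/
def pdLE (n : ℕ) (M : ModuleCat.{0} R) : Prop :=
  ∀ (X : ModuleCat.{0} R) (i : ℕ), n + 1 ≤ i → extVanish R i M X

/-- `S` is a (first) syzygy of `M`: there is an exact sequence `0 → S → P → M → 0`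
with `P` projective. -/
def IsSyzygy (S M : ModuleCat.{0} R) : Prop :=
  ∃ (P : ModuleCat.{0} R) (_ : Projective P) (f : P ⟶ M) (ι : S ⟶ P),
    Function.Surjective f ∧ Function.Injective ι ∧ Function.Exact ι f

/-- `S` is an `n`-th syzygy of `M`. -/
def IsNthSyzygy : ℕ → ModuleCat.{0} R → ModuleCat.{0} R → Prop
  | 0, S, M => Nonempty (S ≅ M)
  | n + 1, S, M => ∃ S' : ModuleCat.{0} R, IsSyzygy R S' M ∧ IsNthSyzygy n S S'

/-- `G` is Gorenstein projective: a kernel in a totally acyclic complex of projectives. -/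
def IsGorensteinProjective (G : ModuleCat.{0} R) : Prop :=
  ∃ (P : ℤ → ModuleCat.{0} R) (d : ∀ i : ℤ, P i ⟶ P (i + 1)),
    (∀ i, Projective (P i)) ∧
    (∀ i, Function.Exact (d i) (d (i + 1))) ∧
    (∀ (Q : ModuleCat.{0} R), Projective Q → ∀ i : ℤ,
      Function.Exact (fun φ : P (i + 1 + 1) ⟶ Q => d (i + 1) ≫ φ)
        (fun φ : P (i + 1) ⟶ Q => d i ≫ φ)) ∧
    ∃ ι : G ⟶ P 0, Function.Injective ι ∧ Function.Exact ι (d 0)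

/-- Gorenstein projective dimension at most `n`: some `n`-th syzygy is Gorenstein
projective. -/
def gpdLE (n : ℕ) (M : ModuleCat.{0} R) : Prop :=
  ∃ S : ModuleCat.{0} R, IsNthSyzygy R n S M ∧ IsGorensteinProjective R S

/-- `N` is strongly Gorenstein projective. -/
def IsStronglyGorensteinProjective (N : ModuleCat.{0} R) : Prop :=
  ∃ (P : ModuleCat.{0} R) (_ : Projective P) (f : P ⟶ P),
    Function.Exact f f ∧
    (∀ (Q : ModuleCat.{0} R), Projective Q →
      Function.Exact (fun φ : P ⟶ Q => f ≫ φ) (fun φ : P ⟶ Q => f ≫ φ)) ∧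
    ∃ ι : N ⟶ P, Function.Injective ι ∧ Function.Exact ι f

/-- `S` is a direct summand of `N`. -/
def IsDirectSummand (S N : ModuleCat.{0} R) : Prop :=
  ∃ Y : ModuleCat.{0} R, Nonempty (ModuleCat.of R (↥S × ↥Y) ≅ N)

/-- `Add T`: direct summands of direct sums of copies of `T`. -/
def AddClass (T : ModuleCat.{0} R) : Set (ModuleCat.{0} R) :=
  {X | ∃ (ι : Type) (Y : ModuleCat.{0} R),
    Nonempty (ModuleCat.of R (↥X × ↥Y) ≅ ModuleCat.of R (ι →₀ ↥T))}

/-- `(𝒜, ℬ)` is a cotorsion pair. -/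
def IsCotorsionPair (𝒜 ℬ : Set (ModuleCat.{0} R)) : Prop :=
  𝒜 = leftPerp R ℬ ∧ ℬ = rightPerp R 𝒜

/-- A hereditary pair: `Ext^i(A,B) = 0` for all `i ≥ 1`, `A ∈ 𝒜`, `B ∈ ℬ`. -/
def IsHereditaryPair (𝒜 ℬ : Set (ModuleCat.{0} R)) : Prop :=
  ∀ i : ℕ, 1 ≤ i → ∀ A ∈ 𝒜, ∀ B ∈ ℬ, extVanish R i A B

/-- A complete pair: every module has special approximations. -/
def IsCompletePair (𝒜 ℬ : Set (ModuleCat.{0} R)) : Prop :=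
  ∀ M : ModuleCat.{0} R,
    (∃ (B : ModuleCat.{0} R) (_ : B ∈ ℬ) (L : ModuleCat.{0} R) (_ : L ∈ 𝒜)
      (f : M ⟶ B) (g : B ⟶ L),
      Function.Injective f ∧ Function.Surjective g ∧ Function.Exact f g) ∧
    (∃ (D : ModuleCat.{0} R) (_ : D ∈ ℬ) (C : ModuleCat.{0} R) (_ : C ∈ 𝒜)
      (f : D ⟶ C) (g : C ⟶ M),
      Function.Injective f ∧ Function.Surjective g ∧ Function.Exact f g)

/-- `T` is an `n`-tilting module. -/
def IsNTilting (n : ℕ) (T : ModuleCat.{0} R) : Prop :=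
  pdLE R n T ∧
  (∀ (ι : Type) (i : ℕ), 1 ≤ i → extVanish R i T (ModuleCat.of R (ι →₀ ↥T))) ∧
  ∃ (C : ℕ → ModuleCat.{0} R) (D : ∀ i : ℕ, C i ⟶ C (i + 1)),
    (∀ i, Function.Exact (D i) (D (i + 1))) ∧
    Subsingleton (C 0) ∧
    Nonempty (C 1 ≅ ModuleCat.of R R) ∧
    (∀ i : ℕ, 2 ≤ i → i ≤ n + 2 → C i ∈ AddClass R T) ∧
    (∀ i : ℕ, n + 3 ≤ i → Subsingleton (C i))

/-- `T` is a tilting module. -/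
def IsTilting (T : ModuleCat.{0} R) : Prop :=
  ∃ n : ℕ, IsNTilting R n T

end

namespace Stmt1Aux

open CategoryTheory Limits Opposite

lemma subsingleton_of_isZero {M : ModuleCat.{0} ℤ} (h : IsZero M) : Subsingleton M := by
  have h0 : (𝟙 M : M ⟶ M) = 0 := h.eq_of_src _ _
  refine ⟨fun a b => ?_⟩
  have ha : (𝟙 M : M ⟶ M) a = (0 : M ⟶ M) a := by rw [h0]
  have hb : (𝟙 M : M ⟶ M) b = (0 : M ⟶ M) b := by rw [h0]
  have : a = b := by
    change (𝟙 M : M ⟶ M) a = (𝟙 M : M ⟶ M) b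
    rw [ha, hb]
    show (0 : M →ₗ[ℤ] M) a = (0 : M →ₗ[ℤ] M) b
    simp
  exact this

variable {R : Type} [Ring R]

lemma extVanish_iff_isZero {P : ModuleCat.{0} R} (Pr : ProjectiveResolution P)
    (n : ℕ) (N : ModuleCat.{0} R) :
    extVanish R n P N ↔ IsZero ((Pr.complex.linearYonedaObj ℤ N).homology n) := by
  constructor
  · intro h
    haveI : Subsingleton (((Ext ℤ (ModuleCat.{0} R) n).obj (op P)).obj N) := h
    exact IsZero.of_iso (ModuleCat.isZero_of_subsingleton _) (Pr.isoExt n N).symm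
  · intro h
    exact subsingleton_of_isZero (IsZero.of_iso h (Pr.isoExt n N))

/-- functoriality of the Yoneda complex in the second variable -/
noncomputable def yMap (Z : ChainComplex (ModuleCat.{0} R) ℕ) {A B : ModuleCat.{0} R} (f : A ⟶ B) :
    Z.linearYonedaObj ℤ A ⟶ Z.linearYonedaObj ℤ B where
  f i := ModuleCat.ofHom (Linear.rightComp ℤ (Z.X i) f)
  comm' i j hij := by
    ext φ
    change (Z.d j i ≫ φ) ≫ f = Z.d j i ≫ (φ ≫ f)
    exact Category.assoc _ _ _


section LES

lemma hom_shortExact {A B C : ModuleCat.{0} R}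
    (f : A ⟶ B) (g : B ⟶ C) (hf : Function.Injective f) (hg : Function.Surjective g)
    (hfg : Function.Exact f g) (Zj : ModuleCat.{0} R) [Projective Zj]
    (w : ModuleCat.ofHom (Linear.rightComp ℤ Zj f) ≫ ModuleCat.ofHom (Linear.rightComp ℤ Zj g) = 0) :
    (ShortComplex.mk (ModuleCat.ofHom (Linear.rightComp ℤ Zj f))
      (ModuleCat.ofHom (Linear.rightComp ℤ Zj g)) w).ShortExact := by
  haveI hm : Mono (ShortComplex.mk (ModuleCat.ofHom (Linear.rightComp ℤ Zj f))
      (ModuleCat.ofHom (Linear.rightComp ℤ Zj g)) w).f := by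
    rw [ModuleCat.mono_iff_injective]
    show Function.Injective (fun φ : Zj ⟶ A => (φ ≫ f : Zj ⟶ B))
    intro φ ψ h
    have hx : ∀ x, φ x = ψ x := fun x => hf (ConcreteCategory.congr_hom h x)
    exact ModuleCat.hom_ext (LinearMap.ext hx)
  haveI he : Epi (ShortComplex.mk (ModuleCat.ofHom (Linear.rightComp ℤ Zj f))
      (ModuleCat.ofHom (Linear.rightComp ℤ Zj g)) w).g := by
    rw [ModuleCat.epi_iff_surjective]
    show Function.Surjective (fun φ : Zj ⟶ B => (φ ≫ g : Zj ⟶ C))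
    intro ψ
    haveI : Epi g := (ModuleCat.epi_iff_surjective g).2 hg
    exact ⟨Projective.factorThru ψ g, Projective.factorThru_comp ψ g⟩
  refine ⟨?_⟩
  rw [ShortComplex.moduleCat_exact_iff]
  show ∀ (φ : Zj ⟶ B), (φ ≫ g : Zj ⟶ C) = 0 → ∃ ψ : Zj ⟶ A, (ψ ≫ f : Zj ⟶ B) = φ
  intro φ hφ'
  have hmem : ∀ x, φ x ∈ LinearMap.range f.hom := by
    intro x
    have h0 : g (φ x) = 0 := ConcreteCategory.congr_hom hφ' x
    obtain ⟨a, ha⟩ := (hfg (φ x)).1 h0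
    exact LinearMap.mem_range.2 ⟨a, ha⟩
  let e := LinearEquiv.ofInjective f.hom hf
  have key : ∀ y : LinearMap.range f.hom, f (e.symm y) = (y : B) := by
    intro y
    conv_rhs => rw [← e.apply_symm_apply y]
    rw [LinearEquiv.ofInjective_apply]
  refine ⟨ModuleCat.ofHom (e.symm.toLinearMap.comp
    (LinearMap.codRestrict _ φ.hom hmem)), ?_⟩
  apply ModuleCat.hom_ext
  apply LinearMap.ext
  intro x
  exact key ⟨φ x, hmem x⟩

lemma ext_les (Y : ModuleCat.{0} R) {A B C : ModuleCat.{0} R}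
    (f : A ⟶ B) (g : B ⟶ C) (hf : Function.Injective f) (hg : Function.Surjective g)
    (hfg : Function.Exact f g) (i : ℕ) :
    (extVanish R i Y B → extVanish R (i + 1) Y A → extVanish R i Y C) ∧
    (extVanish R i Y C → extVanish R (i + 1) Y B → extVanish R (i + 1) Y A) := by
  have hfg0 : f ≫ g = 0 := by
    ext a
    exact hfg.apply_apply_eq_zero a
  let P := ProjectiveResolution.of Y
  let S : ShortComplex (CochainComplex (ModuleCat.{0} ℤ) ℕ) :=
    ShortComplex.mk (yMap P.complex f) (yMap P.complex g) (by
      ext j φ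
      change (φ ≫ f) ≫ g = (0 : P.complex.X j ⟶ C)
      exact (Category.assoc (φ : P.complex.X j ⟶ A) f g).trans ((congrArg _ hfg0).trans (Limits.comp_zero (f := (φ : P.complex.X j ⟶ A)))))
  have hS : S.ShortExact := by
    apply HomologicalComplex.shortExact_of_degreewise_shortExact
    intro j
    haveI : Projective (P.complex.X j) := inferInstance
    exact hom_shortExact f g hf hg hfg (P.complex.X j) _
  have hij : (ComplexShape.up ℕ).Rel i (i + 1) := by simp
  constructor
  · intro hB hA
    rw [extVanish_iff_isZero P] at hB hA ⊢
    have hex := hS.homology_exact₃ i (i + 1) hij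
    exact hex.isZero_X₂ (hB.eq_of_src _ _) (hA.eq_of_tgt _ _)
  · intro hC hB
    rw [extVanish_iff_isZero P] at hC hB ⊢
    have hex := hS.homology_exact₁ i (i + 1) hij
    exact hex.isZero_X₂ (hC.eq_of_src _ _) (hB.eq_of_tgt _ _)

end LES


lemma extVanish_of_injective (Y E : ModuleCat.{0} R) (hE : Injective E)
    {i : ℕ} (hi : 1 ≤ i) : extVanish R i Y E := by
  haveI := hE
  obtain ⟨m, rfl⟩ : ∃ m, i = m + 1 := ⟨i - 1, by omega⟩
  let P := ProjectiveResolution.of Y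
  rw [extVanish_iff_isZero P, ← HomologicalComplex.exactAt_iff_isZero_homology]
  rw [HomologicalComplex.exactAt_iff' _ m (m + 1) (m + 2)
    (by rw [CochainComplex.prev_nat_succ]) (by rw [CochainComplex.next]; omega)]
  rw [ShortComplex.moduleCat_exact_iff]
  show ∀ (φ : P.complex.X (m + 1) ⟶ E), (P.complex.d (m + 2) (m + 1) ≫ φ) = 0 →
    ∃ ψ : P.complex.X m ⟶ E, (P.complex.d (m + 1) m ≫ ψ) = φ
  intro φ hφ
  let T := P.complex.sc' (m + 2) (m + 1) m
  have hTex : T.Exact := by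
    have h1 := P.complex_exactAt_succ m
    rwa [HomologicalComplex.exactAt_iff' _ (m + 2) (m + 1) m
      (by rw [ChainComplex.prev]; omega) (by rw [ChainComplex.next_nat_succ])] at h1
  haveI : Mono T.fromOpcycles := hTex.mono_fromOpcycles
  have hφ' : T.f ≫ φ = 0 := hφ
  let φ' := T.descOpcycles φ hφ'
  let ψ := Injective.factorThru φ' T.fromOpcycles
  refine ⟨ψ, ?_⟩
  have h2 : T.g ≫ ψ = φ := by
    rw [← T.p_fromOpcycles, Category.assoc, Injective.comp_factorThru]
    exact T.p_descOpcycles φ hφ'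
  exact h2

lemma exists_cosyzygy (M : ModuleCat.{0} R) :
    ∃ (E N : ModuleCat.{0} R) (_ : Injective E) (f : M ⟶ E) (g : E ⟶ N),
      Function.Injective f ∧ Function.Surjective g ∧ Function.Exact f g := by
  let f := Injective.ι M
  let g := Limits.cokernel.π f
  have hw : f ≫ g = 0 := Limits.cokernel.condition f
  let S := ShortComplex.mk f g hw
  have hex : S.Exact := S.exact_of_g_is_cokernel (Limits.cokernelIsCokernel f)
  refine ⟨Injective.under M, Limits.cokernel f, inferInstance, f, g, ?_, ?_, ?_⟩
  · rw [← ModuleCat.mono_iff_injective]; infer_instance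
  · rw [← ModuleCat.epi_iff_surjective]; infer_instance
  · exact (ShortComplex.ShortExact.moduleCat_exact_iff_function_exact S).1 hex


lemma hered (G W : ModuleCat.{0} R) (hW : W ∈ leftPerp R (perpInf R G)) :
    ∀ i : ℕ, 1 ≤ i → ∀ N ∈ perpInf R G, extVanish R i W N := by
  intro i
  induction i with
  | zero => intro h; exact absurd h (by omega)
  | succ j IH =>
    intro _ N hN
    rcases Nat.eq_zero_or_pos j with hj | hj
    · subst hj; exact hW N hN
    · obtain ⟨E, N', hE, f, g, hfi, hgs, hfg⟩ := exists_cosyzygy N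
      have hN' : N' ∈ perpInf R G := by
        intro m hm
        exact (ext_les G f g hfi hgs hfg m).1 (extVanish_of_injective G E hE hm)
          (hN (m + 1) (by omega))
      exact (ext_les W f g hfi hgs hfg j).2 (IH hj N' hN')
        (extVanish_of_injective W E hE (by omega))

lemma downshift (G : ModuleCat.{0} R) (m : ℕ) :
    ∀ (N : ModuleCat.{0} R), (∀ i : ℕ, m + 1 ≤ i → extVanish R i G N) →
    ∀ W ∈ leftPerp R (perpInf R G), ∀ i : ℕ, m + 1 ≤ i → extVanish R i W N := by
  induction m with
  | zero =>
    intro N hN W hW i hi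
    exact hered G W hW i hi N (fun j hj => hN j hj)
  | succ m IH =>
    intro N hN W hW i hi
    obtain ⟨E, N', hE, f, g, hfi, hgs, hfg⟩ := exists_cosyzygy N
    have hN' : ∀ i : ℕ, m + 1 ≤ i → extVanish R i G N' := fun i hi =>
      (ext_les G f g hfi hgs hfg i).1 (extVanish_of_injective G E hE (by omega))
        (hN (i + 1) (by omega))
    obtain ⟨j, rfl⟩ : ∃ j, i = j + 1 := ⟨i - 1, by omega⟩
    exact (ext_les W f g hfi hgs hfg j).2 (IH N' hN' W hW j (by omega))
      (extVanish_of_injective W E hE (by omega))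

end Stmt1Aux

theorem stmt1 (R : Type) [Ring R] (n : ℕ) (G M : ModuleCat.{0} R)
    (h : ∀ i : ℕ, n + 1 ≤ i → extVanish R i G M) :
    ∀ W ∈ leftPerp R (perpInf R G), ∀ i : ℕ, n + 1 ≤ i → extVanish R i W M := by
  exact fun W hW i hi => Stmt1Aux.downshift G n M h W hW i hi
end

section
/- Let R be a ring, n a nonnegative integer, and G an R-module with projective dimension at most n. Then every R-module in ^⊥(G^{⊥∞}) has projective dimension at most n. -/
open CategoryTheory Opposite

noncomputable section

namespace Stmt2Aux

open CategoryTheory Limits Opposite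


variable {R : Type} [Ring R]

lemma subsingleton_iff_of_iso {A B : ModuleCat ℤ} (e : A ≅ B) :
    Subsingleton A ↔ Subsingleton B :=
  Equiv.subsingleton_congr ((forget _).mapIso e).toEquiv

def postMap (K : ChainComplex (ModuleCat.{0} R) ℕ)
    {A B : ModuleCat.{0} R} (g : A ⟶ B) :
    K.linearYonedaObj ℤ A ⟶ K.linearYonedaObj ℤ B where
  f i := ((linearYoneda ℤ (ModuleCat.{0} R)).map g).app (op (K.X i))
  comm' i j _ := by
    ext φ
    simp [ChainComplex.linearYonedaObj]
    exact (Category.assoc (obj := ModuleCat.{0} R) (K.d j i) φ g).symm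

lemma isZero_homology_of_injective {M : ModuleCat.{0} R}
    (P : ProjectiveResolution M) (I : ModuleCat.{0} R) [Injective I] (k : ℕ) :
    IsZero ((P.complex.linearYonedaObj ℤ I).homology (k + 1)) := by
  rw [← HomologicalComplex.exactAt_iff_isZero_homology,
    HomologicalComplex.exactAt_iff' _ k (k + 1) (k + 2) (by simp) (by simp),
    ShortComplex.moduleCat_exact_iff]
  intro ψ hψ
  have hψ' : P.complex.d (k + 2) (k + 1) ≫ ψ = 0 := by
    exact hψ
  refine ⟨(P.exact_succ k).descToInjective ψ hψ', ?_⟩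
  exact (P.exact_succ k).comp_descToInjective ψ hψ'


variable {R : Type} [Ring R]

lemma key (S : ShortComplex (ModuleCat.{0} R)) (hS : S.ShortExact)
    [Injective S.X₂] (M : ModuleCat.{0} R) (k : ℕ) (hk : 1 ≤ k) :
    (Subsingleton (((Ext ℤ (ModuleCat.{0} R) k).obj (op M)).obj S.X₃) ↔
      Subsingleton (((Ext ℤ (ModuleCat.{0} R) (k + 1)).obj (op M)).obj S.X₁)) := by
  obtain ⟨k, rfl⟩ : ∃ m, k = m + 1 := ⟨k - 1, by omega⟩
  have P : ProjectiveResolution M := (HasProjectiveResolution.out (Z := M)).some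
  haveI := hS.mono_f
  haveI := hS.epi_g
  let T : ShortComplex (CochainComplex (ModuleCat ℤ) ℕ) :=
    ShortComplex.mk (postMap P.complex S.f) (postMap P.complex S.g)
      (by
        ext i φ
        simp [postMap, S.zero, LinearMap.zero_apply]
        exact (Category.assoc (obj := ModuleCat.{0} R) φ S.f S.g).trans (by rw [S.zero]; exact Limits.comp_zero))
  have hT : T.ShortExact := by
    rw [HomologicalComplex.shortExact_iff_degreewise_shortExact]
    intro i
    refine ShortComplex.ShortExact.mk' ?_ ?_ ?_
    · rw [ShortComplex.moduleCat_exact_iff]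
      intro ψ hψ
      have hψ' : (ψ : P.complex.X i ⟶ S.X₂) ≫ S.g = 0 := hψ
      exact ⟨hS.exact.liftFromProjective ψ hψ',
        hS.exact.liftFromProjective_comp ψ hψ'⟩
    · rw [ModuleCat.mono_iff_injective]
      intro ψ ψ' h
      exact (cancel_mono S.f).1 h
    · rw [ModuleCat.epi_iff_surjective]
      intro ψ
      exact ⟨Projective.factorThru ψ S.g, Projective.factorThru_comp ψ S.g⟩
  have hrel : (ComplexShape.up ℕ).Rel (k + 1) (k + 2) := rfl
  have h1 : IsZero (T.X₂.homology (k + 1)) := isZero_homology_of_injective P S.X₂ k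
  have h2 : IsZero (T.X₂.homology (k + 2)) := isZero_homology_of_injective P S.X₂ (k + 1)
  haveI : Mono (hT.δ (k + 1) (k + 2) hrel) :=
    (hT.homology_exact₃ (k + 1) (k + 2) hrel).mono_g (h1.eq_of_src _ _)
  haveI : Epi (hT.δ (k + 1) (k + 2) hrel) :=
    (hT.homology_exact₁ (k + 1) (k + 2) hrel).epi_f (h2.eq_of_tgt _ _)
  haveI : IsIso (hT.δ (k + 1) (k + 2) hrel) := isIso_of_mono_of_epi _
  rw [subsingleton_iff_of_iso (P.isoExt (k + 1) S.X₃),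
    subsingleton_iff_of_iso (asIso (hT.δ (k + 1) (k + 2) hrel)),
    subsingleton_iff_of_iso (P.isoExt (k + 2) S.X₁)]


lemma extVanish_def (k : ℕ) (M N : ModuleCat.{0} R) :
    extVanish R k M N ↔ Subsingleton (((Ext ℤ (ModuleCat.{0} R) k).obj (op M)).obj N) :=
  Iff.rfl

def cosSC (X : ModuleCat.{0} R) : ShortComplex (ModuleCat.{0} R) :=
  ShortComplex.mk (Injective.ι X) (cokernel.π (Injective.ι X)) (cokernel.condition _)

lemma cosSC_shortExact (X : ModuleCat.{0} R) : (cosSC X).ShortExact :=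
  { exact := ShortComplex.exact_of_g_is_cokernel _ (cokernelIsCokernel _)
    mono_f := inferInstanceAs (Mono (Injective.ι X))
    epi_g := inferInstanceAs (Epi (cokernel.π (Injective.ι X))) }

instance (X : ModuleCat.{0} R) : Injective (cosSC X).X₂ :=
  inferInstanceAs (Injective (Injective.under X))

def cosIter : ℕ → ModuleCat.{0} R → ModuleCat.{0} R
  | 0, X => X
  | m + 1, X => cosIter m (cokernel (Injective.ι X))

lemma iterVanish (M : ModuleCat.{0} R) (m : ℕ) (X : ModuleCat.{0} R) (j : ℕ) (hj : 1 ≤ j) :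
    extVanish R j M (cosIter m X) ↔ extVanish R (j + m) M X := by
  induction m generalizing X j with
  | zero => rfl
  | succ m ih =>
    have h2 := key (cosSC X) (cosSC_shortExact X) M (j + m) (by omega)
    have e : j + (m + 1) = (j + m) + 1 := by omega
    rw [e]
    exact (ih (cokernel (Injective.ι X)) j hj).trans h2

end Stmt2Aux

end

theorem stmt2 (R : Type) [Ring R] (n : ℕ) (G : ModuleCat.{0} R)
    (h : pdLE R n G) :
    ∀ W ∈ leftPerp R (perpInf R G), pdLE R n W := by
  intro W hW X i hi
  obtain ⟨m, rfl⟩ : ∃ m, i = 1 + m := ⟨i - 1, by omega⟩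
  have hmem : Stmt2Aux.cosIter m X ∈ perpInf R G := by
    intro j hj
    exact (Stmt2Aux.iterVanish G m X j hj).mpr (h X (j + m) (by omega))
  exact (Stmt2Aux.iterVanish W m X 1 le_rfl).mp (hW _ hmem)
end

section
/- Let R be a ring. If ⋯ → P^{-1} → P^0 → P^1 → ⋯ is an exact sequence of projective R-modules with differentials f^i such that every kernel ker(f^i) is Gorenstein projective, then the direct sum ⊕_i ker(f^i) is a strongly Gorenstein projective R-module. -/
open CategoryTheory Opposite

section AuxSGP

variable {R : Type} [Ring R]

lemma gp_presentation {G Q : ModuleCat.{0} R} (hG : IsGorensteinProjective R G)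
    (hQ : Projective Q) :
    ∃ (F E : ModuleCat.{0} R), Projective F ∧ Projective E ∧
      ∃ (j : F ⟶ E) (π : E ⟶ G), Function.Surjective π ∧ Function.Exact j π ∧
        ∀ β : F ⟶ Q, (∀ x, j x = 0 → β x = 0) → ∃ Ψ : E ⟶ Q, ∀ x, Ψ (j x) = β x := by
  obtain ⟨P', d', hP', hex', hhom', ι, hι, hexι⟩ := hG
  let dd3 : (P' (-3) : ModuleCat.{0} R) →ₗ[R] P' (-2) := (d' (-3)).hom
  let dd2 : (P' (-2) : ModuleCat.{0} R) →ₗ[R] P' (-1) := (d' (-2)).hom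
  let dd1 : (P' (-1) : ModuleCat.{0} R) →ₗ[R] P' 0 := (d' (-1)).hom
  let ii : (G : ModuleCat.{0} R) →ₗ[R] P' 0 := ι.hom
  have h32 : ∀ x, dd2 (dd3 x) = 0 := fun x => (hex' (-3)).apply_apply_eq_zero x
  have h21 : ∀ x, dd1 (dd2 x) = 0 := fun x => (hex' (-2)).apply_apply_eq_zero x
  have h10 : ∀ x, (d' 0) (dd1 x) = 0 := fun x => (hex' (-1)).apply_apply_eq_zero x
  have e21 : ∀ x, dd1 x = 0 → ∃ y, dd2 y = x := by
    intro x hx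
    obtain ⟨y, hy⟩ := (hex' (-2) (show ↑(P' (-2+1)) from x)).mp hx
    exact ⟨y, hy⟩
  have e10 : ∀ x, (d' 0) x = 0 → ∃ y, dd1 y = x := by
    intro x hx
    obtain ⟨y, hy⟩ := (hex' (-1) (show ↑(P' (-1+1)) from x)).mp hx
    exact ⟨y, hy⟩
  have hmem : ∀ x, dd1 x ∈ LinearMap.range ii := by
    intro x
    obtain ⟨g, hg⟩ := (hexι (dd1 x)).mp (h10 x)
    exact ⟨g, hg⟩
  set eG : G ≃ₗ[R] LinearMap.range ii := LinearEquiv.ofInjective ii hι with heG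
  set π : (P' (-1) : ModuleCat.{0} R) →ₗ[R] G :=
    eG.symm.toLinearMap ∘ₗ (dd1.codRestrict (LinearMap.range ii) hmem) with hπdef
  have hsymm : ∀ s : LinearMap.range ii, ii (eG.symm s) = (s : ↑(P' 0)) := by
    intro s
    have h1 : ii (eG.symm s) = ↑(eG (eG.symm s)) :=
      (LinearEquiv.ofInjective_apply ii (eG.symm s)).symm
    rw [h1, eG.apply_symm_apply]
  have hπap : ∀ x, ii (π x) = dd1 x := fun x => hsymm ⟨dd1 x, hmem x⟩
  refine ⟨P' (-2), P' (-1), hP' (-2), hP' (-1), ModuleCat.ofHom dd2, ModuleCat.ofHom π, ?_, ?_, ?_⟩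
  · -- surjective
    intro g
    have h0 : (d' 0) (ii g) = 0 := (hexι (ii g)).mpr ⟨g, rfl⟩
    obtain ⟨x, hx⟩ := e10 _ h0
    refine ⟨x, hι ?_⟩
    show ii (π x) = ii g
    rw [hπap, hx]
  · -- exact dd2 π
    intro x
    constructor
    · intro hx
      have hx1 : dd1 x = 0 := by
        have := hπap x
        rw [show π x = 0 from hx, map_zero] at this
        exact this.symm
      obtain ⟨y, hy⟩ := e21 x hx1
      exact ⟨y, hy⟩
    · rintro ⟨y, rfl⟩
      apply hι
      show ii (π (dd2 y)) = ii 0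
      rw [hπap, map_zero, h21]
  · -- extension
    intro β hβ
    have hc : d' (-3) ≫ (show ((P' (-3+1) : ModuleCat.{0} R) ⟶ Q) from β) = 0 := by
      apply ModuleCat.hom_ext
      apply LinearMap.ext
      intro z
      show β (dd3 z) = 0
      exact hβ _ (h32 z)
    obtain ⟨Ψ, hΨ⟩ := (hhom' Q hQ (-3) (show ((P' (-3+1) : ModuleCat.{0} R) ⟶ Q) from β)).mp hc
    refine ⟨(show ((P' (-1) : ModuleCat.{0} R) ⟶ Q) from Ψ), fun x => ?_⟩
    exact DFunLike.congr_fun (congrArg ModuleCat.Hom.hom hΨ) x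

lemma extend_along {C B G Q : ModuleCat.{0} R} (u : C ⟶ B) (p : B ⟶ G)
    (hup : Function.Exact u p) (hpsurj : Function.Surjective p)
    (hB : Projective B) (hG : IsGorensteinProjective R G)
    (hQ : Projective Q) (φ : C ⟶ Q) (hφ : ∀ x, u x = 0 → φ x = 0) :
    ∃ ψ : B ⟶ Q, ∀ x, ψ (u x) = φ x := by
  obtain ⟨F, E, hF, hE, j, π, hπ, hjπ, hext⟩ := gp_presentation hG hQ
  haveI hBm : Module.Projective R B := haveI := hB; B.projective_of_module_projective
  haveI hEm : Module.Projective R E := haveI := hE; E.projective_of_module_projective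
  haveI hFm : Module.Projective R F := haveI := hF; F.projective_of_module_projective
  obtain ⟨k, hk⟩ := Module.projective_lifting_property π.hom p.hom hπ
  obtain ⟨h, hh⟩ := Module.projective_lifting_property p.hom π.hom hpsurj
  have hk' : ∀ b, π (k b) = p b := fun b => DFunLike.congr_fun hk b
  have hh' : ∀ e, p (h e) = π e := fun e => DFunLike.congr_fun hh e
  have hmem1 : ∀ y : F, h (j.hom y) ∈ LinearMap.range u.hom := by
    intro y
    have h0 : p (h (j.hom y)) = 0 := by rw [hh']; exact hjπ.apply_apply_eq_zero y
    obtain ⟨x, hx⟩ := (hup _).mp h0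
    exact ⟨x, hx⟩
  obtain ⟨t, ht⟩ := Module.projective_lifting_property
    u.hom.rangeRestrict
    (LinearMap.codRestrict (LinearMap.range u.hom) (h ∘ₗ j.hom) hmem1)
    u.hom.surjective_rangeRestrict
  have ht' : ∀ y, u (t y) = h (j.hom y) := fun y =>
    congrArg Subtype.val (DFunLike.congr_fun ht y)
  have hmem2 : ∀ b : B, ((h ∘ₗ (k : B →ₗ[R] E)) - LinearMap.id : B →ₗ[R] B) b ∈
      LinearMap.range u.hom := by
    intro b
    have h0 : p (((h ∘ₗ (k : B →ₗ[R] E)) - LinearMap.id : B →ₗ[R] B) b) = 0 := by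
      simp only [LinearMap.sub_apply, LinearMap.comp_apply, LinearMap.id_apply, map_sub]
      rw [hh', hk', sub_self]
    obtain ⟨x, hx⟩ := (hup _).mp h0
    exact ⟨x, hx⟩
  obtain ⟨e, he⟩ := Module.projective_lifting_property
    u.hom.rangeRestrict
    (LinearMap.codRestrict (LinearMap.range u.hom)
      ((h ∘ₗ (k : B →ₗ[R] E)) - LinearMap.id) hmem2)
    u.hom.surjective_rangeRestrict
  have he' : ∀ b, u (e b) = h (k b) - b := fun b =>
    congrArg Subtype.val (DFunLike.congr_fun he b)
  have hβ : ∀ y, j.hom y = 0 → (φ.hom ∘ₗ t) y = 0 := by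
    intro y hy
    show φ (t y) = 0
    apply hφ
    rw [ht', hy, map_zero]
  obtain ⟨Ψ, hΨ⟩ := hext (ModuleCat.ofHom (φ.hom ∘ₗ t)) hβ
  refine ⟨ModuleCat.ofHom ((Ψ.hom ∘ₗ k) - (φ.hom ∘ₗ e) : B →ₗ[R] Q), fun x => ?_⟩
  have h1 : π (k (u x)) = 0 := by rw [hk']; exact hup.apply_apply_eq_zero x
  obtain ⟨y, hy⟩ := (hjπ _).mp h1
  have key : u.hom (t y - e (u x) - x) = 0 := by
    simp only [map_sub, ht', he', hy]
    abel
  have hkey : φ (t y) - (φ (e (u x)) + φ x) = 0 := by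
    have := hφ _ key
    simpa only [sub_sub, map_sub, map_add] using this
  have hQy : Ψ (k (u x)) = φ (t y) := by rw [← hy]; exact hΨ y
  show Ψ (k (u x)) - φ (e (u x)) = φ x
  rw [hQy, sub_eq_zero.mp hkey]
  abel

end AuxSGP

set_option maxHeartbeats 1600000 in
/-- the direct sum of the kernels of an acyclic complex of projectives,
all of whose kernels are Gorenstein projective, is strongly Gorenstein projective. -/
theorem stmt4 (R : Type) [Ring R] (P : ℤ → ModuleCat.{0} R)
    (d : ∀ i : ℤ, P i ⟶ P (i + 1))
    (hP : ∀ i, Projective (P i))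
    (hex : ∀ i, Function.Exact (d i) (d (i + 1)))
    (hker : ∀ i, IsGorensteinProjective R (ModuleCat.of R (LinearMap.ker (d i).hom))) :
    IsStronglyGorensteinProjective R
      (ModuleCat.of R (Π₀ i : ℤ, ↥(LinearMap.ker (d i).hom))) := by
  classical
  set F : ∀ i : ℤ, (↥(P i) →ₗ[R] Π₀ i : ℤ, ↥(P i)) :=
    fun i => (DFinsupp.lsingle (i+1)) ∘ₗ (d i).hom with hF
  set f : (Π₀ i : ℤ, ↥(P i)) →ₗ[R] (Π₀ i : ℤ, ↥(P i)) := DFinsupp.lsum ℕ F with hfdef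
  have fsingle : ∀ (i : ℤ) (a : ↥(P i)),
      f (DFinsupp.single i a) = DFinsupp.single (i+1) ((d i) a) := by
    intro i a
    rw [hfdef, DFinsupp.lsum_single, hF]
    simp
  have feval : ∀ (x : Π₀ i : ℤ, ↥(P i)) (i : ℤ), f x (i+1) = d i (x i) := by
    intro x i
    have hcomp : (DFinsupp.lapply (i+1)) ∘ₗ f
        = (d i).hom ∘ₗ (DFinsupp.lapply i) := by
      apply DFinsupp.lhom_ext
      intro i' a
      simp only [LinearMap.comp_apply, DFinsupp.lapply_apply]
      rw [fsingle]
      by_cases hii : i' = i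
      · subst hii; simp
      · rw [DFinsupp.single_eq_of_ne (by omega), DFinsupp.single_eq_of_ne (Ne.symm hii)]
        simp
    simpa using DFunLike.congr_fun hcomp x
  have hffc : f ∘ₗ f = 0 := by
    apply DFinsupp.lhom_ext
    intro i a
    simp only [LinearMap.comp_apply, LinearMap.zero_apply]
    rw [fsingle, fsingle]
    have h0 : (d (i+1)) ((d i) a) = 0 := (hex i).apply_apply_eq_zero a
    rw [h0, DFinsupp.single_zero]
  have hff : ∀ x, f (f x) = 0 := fun x => DFunLike.congr_fun hffc x
  have kermem : ∀ y : Π₀ i : ℤ, ↥(P i), f y = 0 ↔ ∀ i, d i (y i) = 0 := by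
    intro y
    constructor
    · intro h i
      rw [← feval, h]
      simp
    · intro h
      ext j
      obtain ⟨i, rfl⟩ : ∃ i : ℤ, i + 1 = j := ⟨j - 1, by ring⟩
      rw [feval]
      simp [h i]
  have exactff : Function.Exact f f := by
    intro y
    constructor
    · intro hy
      have h0 : ∀ i, d i (y i) = 0 := (kermem y).mp hy
      have hchoice : ∀ i : ℤ, ∃ a : ↥(P i), d i a = y (i+1) := by
        intro i
        exact (hex i (y (i+1))).mp (h0 (i+1))
      choose g hg using hchoice
      set s : Finset ℤ := y.support.image (fun j => j - 1) with hs
      refine ⟨DFinsupp.mk s (fun i => g i.1), ?_⟩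
      ext j
      obtain ⟨i, rfl⟩ : ∃ i : ℤ, i + 1 = j := ⟨j - 1, by ring⟩
      rw [feval, DFinsupp.mk_apply]
      by_cases hm : i ∈ s
      · rw [dif_pos hm]
        exact hg i
      · rw [dif_neg hm]
        have hy0 : y (i+1) = 0 := by
          by_contra hne
          exact hm (by
            rw [hs]
            exact Finset.mem_image.mpr ⟨i+1, DFinsupp.mem_support_iff.mpr hne, by ring⟩)
        simp [hy0]
    · rintro ⟨x, rfl⟩
      exact hff x
  set ιm : (Π₀ i : ℤ, ↥(LinearMap.ker (d i).hom)) →ₗ[R] (Π₀ i : ℤ, ↥(P i)) :=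
    DFinsupp.mapRange.linearMap (fun i => (LinearMap.ker (d i).hom).subtype) with hιm
  have ιap : ∀ x i, ιm x i = ↑(x i) := by
    intro x i
    rw [hιm]
    simp [DFinsupp.mapRange.linearMap, DFinsupp.mapRange_apply]
    apply DFinsupp.mapRange_apply
  have ιinj : Function.Injective ιm := by
    intro a b hab
    ext i
    have : (↑(a i) : ↥(P i)) = ↑(b i) := by rw [← ιap a i, ← ιap b i, hab]
    exact congrArg Subtype.val (Subtype.ext this)
  have exactιf : Function.Exact ιm f := by
    intro y
    constructor
    · intro hy
      have h0 := (kermem y).mp hy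
      refine ⟨DFinsupp.mk y.support (fun i => ⟨y i.1, LinearMap.mem_ker.mpr (h0 i.1)⟩), ?_⟩
      ext i
      rw [ιap, DFinsupp.mk_apply]
      by_cases hm : i ∈ y.support
      · rw [dif_pos hm]
      · rw [dif_neg hm]
        have := DFinsupp.notMem_support_iff.mp hm
        simp [this]
    · rintro ⟨k, rfl⟩
      apply (kermem _).mpr
      intro i
      rw [ιap]
      exact (k i).2
  haveI : ∀ i : ℤ, Module.Projective R ↥(P i) := fun i => haveI := hP i; (P i).projective_of_module_projective
  have hproj : Projective (ModuleCat.of R (Π₀ i : ℤ, ↥(P i))) :=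
    (ModuleCat.of R (Π₀ i : ℤ, ↥(P i))).projective_of_categoryTheory_projective
  refine ⟨ModuleCat.of R (Π₀ i : ℤ, ↥(P i)), hproj, ModuleCat.ofHom f, exactff, ?_, ModuleCat.ofHom ιm, ιinj, exactιf⟩
  intro Q hQ φ
  constructor
  · intro hφ0
    have hφ0' : LinearMap.comp φ.hom f = 0 := congrArg ModuleCat.Hom.hom hφ0
    have hsingle : ∀ (i : ℤ) (a : ↥(P i)), φ (DFinsupp.single (i+1) ((d i) a)) = 0 := by
      intro i a
      have h3 : φ (f (DFinsupp.single i a)) = 0 := by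
        have h2 := LinearMap.congr_fun hφ0' (DFinsupp.single i a)
        simpa using h2
      rw [fsingle] at h3
      exact h3
    have K : ∀ (j : ℤ) (x : ↥(P j)), d j x = 0 → φ (DFinsupp.single j x) = 0 := by
      intro j
      obtain ⟨i, rfl⟩ : ∃ i : ℤ, i + 1 = j := ⟨j - 1, by ring⟩
      intro x hx
      obtain ⟨a, ha⟩ := (hex i x).mp hx
      rw [← ha]
      exact hsingle i a
    have H : ∀ i : ℤ, ∃ g : ↥(P (i+1)) →ₗ[R] ↥Q,
        ∀ a : ↥(P i), g ((d i) a) = φ (DFinsupp.single i a) := by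
      intro i
      have hmemk : ∀ x : ↥(P (i+1)), (d (i+1)) x ∈ LinearMap.ker (d (i+1+1)).hom :=
        fun x => LinearMap.mem_ker.mpr ((hex (i+1)).apply_apply_eq_zero x)
      set p : ↥(P (i+1)) →ₗ[R] ↥(LinearMap.ker (d (i+1+1)).hom) :=
        LinearMap.codRestrict _ (d (i+1)).hom hmemk with hp
      have hpsurj : Function.Surjective p := by
        rintro ⟨y2, hy2⟩
        obtain ⟨x, hx⟩ := (hex (i+1) y2).mp (LinearMap.mem_ker.mp hy2)
        exact ⟨x, Subtype.ext hx⟩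
      have hup : Function.Exact (d i : ↥(P i) → ↥(P (i+1))) p := by
        intro x
        constructor
        · intro hx
          have h3 : (d (i+1)) x = 0 := congrArg Subtype.val hx
          exact (hex i x).mp h3
        · rintro ⟨a, rfl⟩
          apply Subtype.ext
          exact (hex i).apply_apply_eq_zero a
      set φi : ↥(P i) →ₗ[R] ↥Q :=
        LinearMap.comp φ.hom
          (DFinsupp.lsingle (M := fun i : ℤ => ↥(P i)) (R := R) i) with hφidef
      have hφi : ∀ x : ↥(P i), φi x = φ (DFinsupp.single i x) := by
        intro x
        rfl
      obtain ⟨ψ, hψ⟩ := extend_along (C := P i) (B := P (i+1))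
        (G := ModuleCat.of R ↥(LinearMap.ker (d (i+1+1)).hom)) (Q := Q)
        (d i) (ModuleCat.ofHom p) hup hpsurj (hP (i+1)) (hker (i+1+1)) hQ
        (ModuleCat.ofHom φi) (fun x hx => by show φi x = 0; rw [hφi]; exact K i x hx)
      refine ⟨ψ.hom, fun a => ?_⟩
      rw [← hφi]
      exact hψ a
    have H' : ∀ j : ℤ, ∃ g : ↥(P j) →ₗ[R] ↥Q, ∀ (i : ℤ) (h : i + 1 = j) (a : ↥(P i)),
        g (_root_.cast (congrArg (fun t => ↥(P t)) h) ((d i) a)) = φ (DFinsupp.single i a) := by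
      intro j
      obtain ⟨i₀, rfl⟩ : ∃ i : ℤ, i + 1 = j := ⟨j - 1, by ring⟩
      obtain ⟨g, hg⟩ := H i₀
      refine ⟨g, ?_⟩
      intro i h a
      obtain rfl : i = i₀ := by omega
      exact hg a
    choose Ψ hΨ using H'
    refine ⟨ModuleCat.ofHom (DFinsupp.lsum ℕ Ψ), ?_⟩
    apply ModuleCat.hom_ext
    apply DFinsupp.lhom_ext
    intro i a
    show (DFinsupp.lsum ℕ Ψ) (f (DFinsupp.single i a)) = φ (DFinsupp.single i a)
    rw [fsingle, DFinsupp.lsum_single]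
    exact hΨ (i+1) i rfl a
  · rintro ⟨ψ, rfl⟩
    apply ModuleCat.hom_ext
    apply LinearMap.ext
    intro x
    show ψ (f (f x)) = 0
    rw [hff x, map_zero]
end

section
/- Let R be a ring and N a strongly Gorenstein projective R-module. Then N^⊥ = N^{⊥∞}, i.e., a module X satisfies Ext^1_R(N,X) = 0 if and only if Ext^i_R(N,X) = 0 for all i ≥ 1. -/
open CategoryTheory Opposite

noncomputable section Aux

theorem aux_extVanish_iff {R : Type} [Ring R] {N P : ModuleCat.{0} R}
    (hP : Projective P) {f : P ⟶ P} {g : P ⟶ N}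
    (hf2 : f ≫ f = 0) (hff : ∀ x, f x = 0 → ∃ y, f y = x)
    (hfg : f ≫ g = 0) (hg : Function.Surjective g)
    (hgf : ∀ x, g x = 0 → ∃ y, f y = x)
    (X : ModuleCat.{0} R) (n : ℕ) :
    extVanish R (n + 1) N X ↔ ∀ φ : P ⟶ X, f ≫ φ = 0 → ∃ ψ : P ⟶ X, f ≫ ψ = φ := by
  classical
  let K : ChainComplex (ModuleCat.{0} R) ℕ :=
    ChainComplex.of (fun _ => P) (fun _ => f) (fun _ => hf2)
  have hKd : ∀ m : ℕ, K.d (m + 1) m = f := fun m => ChainComplex.of_d (fun _ => P) (fun _ => f) m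
  let res : ProjectiveResolution N :=
    { complex := K
      projective := fun _ => hP
      π := (ChainComplex.toSingle₀Equiv K N).symm ⟨g, by rw [hKd]; exact hfg⟩
      quasiIso := ⟨fun m => by
        cases m with
        | zero =>
          rw [ChainComplex.quasiIsoAt₀_iff, ShortComplex.quasiIso_iff_of_zeros']
          · have hx : (ShortComplex.mk f g hfg).Exact := by
              rw [ShortComplex.moduleCat_exact_iff]
              exact fun x hx => hgf x hx
            have he : Epi (ShortComplex.mk f g hfg).g :=
              (ModuleCat.epi_iff_surjective g).2 hg
            refine (ShortComplex.exact_and_epi_g_iff_of_iso ?_).2 ⟨hx, he⟩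
            exact ShortComplex.isoMk (Iso.refl _) (Iso.refl _) (Iso.refl _)
              (by simp; exact (ChainComplex.of_d (fun _ => P) (fun _ => f) 0).symm)
              (by simp [ChainComplex.toSingle₀Equiv_symm_apply_f_zero]; exact (Category.id_comp _).trans (Category.comp_id _).symm)
          all_goals rfl
        | succ m =>
          rw [quasiIsoAt_iff_exactAt' _ _ (ChainComplex.exactAt_succ_single_obj _ _)]
          rw [HomologicalComplex.exactAt_iff' _ (m + 2) (m + 1) m (by simp) (by simp)]
          rw [ShortComplex.moduleCat_exact_iff]
          intro x hx
          dsimp at x hx ⊢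
          change (K.d (m + 1) m) x = 0 at hx
          rw [hKd] at hx
          obtain ⟨y, hy⟩ := hff x hx
          exact ⟨y, by change (K.d (m + 1 + 1) (m + 1)) y = x; rw [hKd]; exact hy⟩⟩ }
  let L := K.linearYonedaObj ℤ X
  have e : extMod R (n + 1) N X ≅ L.homology (n + 1) := res.isoExt (n + 1) X
  have h1 : extVanish R (n + 1) N X ↔ Subsingleton (L.homology (n + 1)) :=
    Equiv.subsingleton_congr ((forget (ModuleCat ℤ)).mapIso e).toEquiv
  have h2 : Subsingleton (L.homology (n + 1)) ↔ L.ExactAt (n + 1) := by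
    rw [HomologicalComplex.exactAt_iff_isZero_homology]
    constructor
    · intro h; exact ModuleCat.isZero_of_subsingleton _
    · intro h
      have hid : 𝟙 (L.homology (n + 1)) = 0 := h.eq_of_src _ _
      have hz : ∀ x : L.homology (n + 1), x = 0 := by
        intro x
        calc x = (𝟙 (L.homology (n + 1))) x := rfl
          _ = (0 : L.homology (n + 1) ⟶ L.homology (n + 1)) x := by rw [hid]
          _ = 0 := rfl
      exact ⟨fun a b => by rw [hz a, hz b]⟩
  have h3 : L.ExactAt (n + 1) ↔
      ∀ φ : P ⟶ X, f ≫ φ = 0 → ∃ ψ : P ⟶ X, f ≫ ψ = φ := by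
    rw [HomologicalComplex.exactAt_iff' _ n (n + 1) (n + 2) (by simp) (by simp)]
    rw [ShortComplex.moduleCat_exact_iff]
    constructor
    · intro h φ hφ
      obtain ⟨ψ, hψ⟩ := h φ (by simp [L, ChainComplex.linearYonedaObj_d, hKd]; exact hφ)
      exact ⟨ψ, by simp [L, ChainComplex.linearYonedaObj_d, hKd] at hψ; exact hψ⟩
    · intro h φ hφ
      obtain ⟨ψ, hψ⟩ := h φ (by simp [L, ChainComplex.linearYonedaObj_d, hKd] at hφ; exact hφ)
      exact ⟨ψ, by simp [L, ChainComplex.linearYonedaObj_d, hKd]; exact hψ⟩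
  rw [h1, h2, h3]

end Aux

/-- for `N` strongly Gorenstein projective, `N^⊥ = N^{⊥∞}`. -/
theorem stmt5 (R : Type) [Ring R] (N : ModuleCat.{0} R)
    (hN : IsStronglyGorensteinProjective R N) :
    {X : ModuleCat.{0} R | extVanish R 1 N X} = perpInf R N := by
  obtain ⟨P, hP, f, hff, -, ι, hι, hιf⟩ := hN
  have hf2 : f ≫ f = 0 := by
    ext x
    simpa using hff.apply_apply_eq_zero x
  have hffE : ∀ x, f x = 0 → ∃ y, f y = x := by
    intro x hx
    exact (hff x).1 hx
  have hmem : ∀ p : ↑P, f p ∈ LinearMap.range ι.hom := by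
    intro p
    obtain ⟨y, hy⟩ := (hιf (f p)).1 (hff.apply_apply_eq_zero p)
    exact ⟨y, hy⟩
  let e := LinearEquiv.ofInjective ι.hom hι
  have hes : ∀ x : LinearMap.range ι.hom, ι (e.symm x) = (x : ↑P) := by
    intro x
    exact congrArg Subtype.val (e.apply_symm_apply x)
  let g : P ⟶ N :=
    ModuleCat.ofHom (e.symm.toLinearMap ∘ₗ LinearMap.codRestrict (LinearMap.range ι.hom) f.hom hmem)
  have hιg : ∀ p : ↑P, ι (g p) = f p := fun p => hes ⟨f p, hmem p⟩
  have hfg : f ≫ g = 0 := by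
    ext p
    have h1 : ι (g (f p)) = 0 := by
      rw [hιg]
      exact hff.apply_apply_eq_zero p
    have h2 : g (f p) = 0 := hι (by simpa using h1)
    simpa using h2
  have hgsurj : Function.Surjective g := by
    intro y
    have h0 : f (ι y) = 0 := hιf.apply_apply_eq_zero y
    obtain ⟨p, hp⟩ := (hff (ι y)).1 h0
    exact ⟨p, hι (by rw [hιg, hp])⟩
  have hgf : ∀ x, g x = 0 → ∃ y, f y = x := by
    intro x hx
    have : f x = 0 := by rw [← hιg x, hx]; simp
    exact (hff x).1 this
  ext X
  simp only [Set.mem_setOf_eq, perpInf]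
  constructor
  · intro h1 i hi
    obtain ⟨m, rfl⟩ : ∃ m, i = m + 1 := ⟨i - 1, by omega⟩
    exact (aux_extVanish_iff hP hf2 hffE hfg hgsurj hgf X m).2
      ((aux_extVanish_iff hP hf2 hffE hfg hgsurj hgf X 0).1 h1)
  · intro h
    exact h 1 le_rfl
end

section
/- Let R be a ring and N a strongly Gorenstein projective R-module. Then N^⊥ = {X : Ext^1_R(N,X) = 0} is a thick subcategory of R-Mod: it is closed under direct summands, and for every short exact sequence 0 → A → B → C → 0 with two of A, B, C in N^⊥, the third is also in N^⊥. -/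
open CategoryTheory Opposite

namespace Stmt6Aux

noncomputable section
open CategoryTheory Opposite Limits

variable {R : Type} [Ring R]

lemma exists_factor {A B C Q : ModuleCat.{0} R} (s : A ⟶ B) (t : B ⟶ C)
    (hs : Function.Injective s) (hst : Function.Exact s t)
    (g : Q ⟶ B) (hg : ∀ x, t (g x) = 0) : ∃ u : Q ⟶ A, ∀ x, s (u x) = g x := by
  have hmem : ∀ x : Q, g x ∈ LinearMap.range s.hom := fun x => (hst (g x)).1 (hg x)
  let e : A ≃ₗ[R] LinearMap.range s.hom := LinearEquiv.ofInjective s.hom hs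
  refine ⟨ModuleCat.ofHom (e.symm.toLinearMap.comp (g.hom.codRestrict (LinearMap.range s.hom) hmem) : Q →ₗ[R] A), ?_⟩
  intro x
  have h1 : ((ModuleCat.ofHom (e.symm.toLinearMap.comp (g.hom.codRestrict (LinearMap.range s.hom) hmem)) : Q ⟶ A) x) = e.symm ⟨g x, hmem x⟩ := rfl
  have h2 : s (e.symm ⟨g x, hmem x⟩) = (e (e.symm ⟨g x, hmem x⟩) : B) := rfl
  show s _ = g x
  rw [h1, h2, e.apply_symm_apply]

section Res
variable {N P : ModuleCat.{0} R} (hP : Projective P) (f : P ⟶ P)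
  (hff : Function.Exact f f) (ι : N ⟶ P) (hι : Function.Injective ι)
  (hexact : Function.Exact ι f)

def myComplex : ChainComplex (ModuleCat.{0} R) ℕ :=
  ChainComplex.of (fun _ => P) (fun _ => f)
    (fun _ => by
      ext x
      exact hff.apply_apply_eq_zero x)

lemma myComplex_d (n : ℕ) : (myComplex f hff).d (n+1) n = f := by unfold myComplex; exact ChainComplex.of_d (fun _ : ℕ => P) (fun _ => f) n

example : True := trivial

variable (π₀ : P ⟶ N) (hπ : ∀ x, ι (π₀ x) = f x)

include hff hι hπ in
lemma f_comp_pi : f ≫ π₀ = 0 := by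
  ext x
  apply hι
  show ι (π₀ (f x)) = ι 0
  rw [hπ, map_zero]
  exact hff.apply_apply_eq_zero x

include hff hι hπ hexact in
lemma pi_surj : Function.Surjective π₀ := by
  intro n
  obtain ⟨x, hx⟩ := (hff (ι n)).1 (hexact.apply_apply_eq_zero n)
  exact ⟨x, hι (by rw [hπ, hx])⟩

include hff hι hπ in
lemma exact_f_pi : Function.Exact f π₀ := by
  intro y
  constructor
  · intro hy
    apply (hff y).1
    rw [← hπ, hy, map_zero]
  · rintro ⟨x, rfl⟩
    apply hι
    show ι (π₀ (f x)) = ι 0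
    rw [hπ, map_zero]
    exact hff.apply_apply_eq_zero x

noncomputable def myRes : ProjectiveResolution N where
  complex := myComplex f hff
  projective n := hP
  π := (ChainComplex.toSingle₀Equiv _ _).symm ⟨π₀, by
    rw [myComplex_d]
    exact f_comp_pi f hff ι hι π₀ hπ⟩
  quasiIso := ⟨fun n => by
    cases n with
    | zero =>
      rw [ChainComplex.quasiIsoAt₀_iff, ShortComplex.quasiIso_iff_of_zeros']
      · refine ⟨(ShortComplex.moduleCat_exact_iff _).2 ?_, (ModuleCat.epi_iff_surjective _).2 ?_⟩
        · intro x hx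
          have hx' : π₀ x = 0 := hx
          obtain ⟨y, hy⟩ := (exact_f_pi f hff ι hι π₀ hπ x).1 hx'
          refine ⟨y, ?_⟩
          show (myComplex f hff).d 1 0 y = x
          rw [myComplex_d]
          exact hy
        · exact pi_surj f hff ι hι hexact π₀ hπ
      all_goals rfl
    | succ n =>
      rw [quasiIsoAt_iff_exactAt']
      · rw [HomologicalComplex.exactAt_iff' _ (n + 1 + 1) (n + 1) n (by simp) (by simp)]
        refine (ShortComplex.moduleCat_exact_iff _).2 ?_
        intro x hx
        have hx' : f x = 0 := by rw [← myComplex_d f hff n]; exact hx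
        obtain ⟨y, hy⟩ := (hff x).1 hx'
        refine ⟨y, ?_⟩
        show (myComplex f hff).d (n+1+1) (n+1) y = x
        rw [myComplex_d]; exact hy
      · apply ChainComplex.exactAt_succ_single_obj⟩

lemma subsingleton_iff_isZero {S : Type} [Ring S] (M : ModuleCat.{0} S) :
    Subsingleton M ↔ IsZero M := by
  constructor
  · intro h; exact ModuleCat.isZero_of_subsingleton M
  · intro h
    have h1 : (𝟙 M : M ⟶ M) = 0 := h.eq_of_src _ _
    refine ⟨fun a b => ?_⟩
    have ha : a = (𝟙 M : M ⟶ M) a := rfl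
    have hb : b = (𝟙 M : M ⟶ M) b := rfl
    rw [ha, hb, h1]
    rfl

include hP hff hι hexact in
lemma extVanish_one_iff (X : ModuleCat.{0} R) :
    Subsingleton (((Ext ℤ (ModuleCat.{0} R) 1).obj (op N)).obj X) ↔
      ∀ g : P ⟶ X, f ≫ g = 0 → ∃ h : P ⟶ X, f ≫ h = g := by
  obtain ⟨π₀, hπ⟩ := exists_factor ι f hι hexact f (fun x => hff.apply_apply_eq_zero x)
  let Res := myRes hP f hff ι hι hexact π₀ hπ
  let K := (myComplex f hff).linearYonedaObj ℤ X
  have e := Res.isoExt (R := ℤ) 1 X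
  rw [subsingleton_iff_isZero, e.isZero_iff]
  have h3 : IsZero (K.homology 1) ↔ K.ExactAt 1 :=
    (HomologicalComplex.exactAt_iff_isZero_homology K 1).symm
  rw [show ((myRes hP f hff ι hι hexact π₀ hπ).complex.linearYonedaObj ℤ X).homology 1 = K.homology 1 from rfl, h3]
  rw [HomologicalComplex.exactAt_iff' K 0 1 2 (by simp) (by simp)]
  rw [ShortComplex.moduleCat_exact_iff]
  constructor
  · intro h g hg
    have h2 : (HomologicalComplex.sc' K 0 1 2).g g = 0 := by
      show (myComplex f hff).d 2 1 ≫ g = 0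
      rw [myComplex_d]; exact hg
    obtain ⟨y, hy⟩ := h g h2
    refine ⟨y, ?_⟩
    rw [← hy]
    show f ≫ (y : P ⟶ X) = (myComplex f hff).d 1 0 ≫ (y : P ⟶ X)
    rw [myComplex_d]
    rfl
  · intro h g hg
    have hg2 : f ≫ (show P ⟶ X from g) = 0 := by
      rw [← myComplex_d f hff 1]
      exact hg
    obtain ⟨y, hy⟩ := h _ hg2
    refine ⟨y, ?_⟩
    show (myComplex f hff).d 1 0 ≫ (y : P ⟶ X) = _
    rw [myComplex_d]
    exact hy
end Res

end
end Stmt6Aux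

/-- for `N` strongly Gorenstein projective, `N^⊥` is thick. -/
theorem stmt6 (R : Type) [Ring R] (N : ModuleCat.{0} R)
    (hN : IsStronglyGorensteinProjective R N) :
    (∀ B : ModuleCat.{0} R, extVanish R 1 N B →
      ∀ X Y : ModuleCat.{0} R, Nonempty (ModuleCat.of R (↥X × ↥Y) ≅ B) →
        extVanish R 1 N X) ∧
    (∀ (A B C : ModuleCat.{0} R) (f : A ⟶ B) (g : B ⟶ C),
      Function.Injective f → Function.Surjective g → Function.Exact f g →
        ((extVanish R 1 N A → extVanish R 1 N B → extVanish R 1 N C) ∧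
         (extVanish R 1 N A → extVanish R 1 N C → extVanish R 1 N B) ∧
         (extVanish R 1 N B → extVanish R 1 N C → extVanish R 1 N A))) := by
  classical
  obtain ⟨P, hP, f, hff, -, ι, hι, hexact⟩ := hN
  haveI : Projective P := hP
  have key : ∀ X : ModuleCat.{0} R, extVanish R 1 N X ↔
      ∀ g : P ⟶ X, f ≫ g = 0 → ∃ h : P ⟶ X, f ≫ h = g :=
    fun X => Stmt6Aux.extVanish_one_iff hP f hff ι hι hexact X
  have hff0 : f ≫ f = 0 := by
    ext x
    exact hff.apply_apply_eq_zero x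
  constructor
  · -- summands
    rintro B hB X Y ⟨e⟩
    rw [key] at hB ⊢
    intro g hg
    let inl : X ⟶ ModuleCat.of R (↥X × ↥Y) := ModuleCat.ofHom (LinearMap.inl R X Y)
    let fst : ModuleCat.of R (↥X × ↥Y) ⟶ X := ModuleCat.ofHom (LinearMap.fst R X Y)
    obtain ⟨h', hh'⟩ := hB (g ≫ inl ≫ e.hom) (by rw [← Category.assoc, hg]; simp)
    refine ⟨h' ≫ e.inv ≫ fst, ?_⟩
    have hif : inl ≫ fst = 𝟙 X := by
      ext x
      rfl
    calc f ≫ h' ≫ e.inv ≫ fst = (f ≫ h') ≫ e.inv ≫ fst := by simp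
      _ = ((g ≫ inl ≫ e.hom) ≫ e.inv) ≫ fst := by rw [hh']; simp
      _ = (g ≫ inl) ≫ fst := by simp
      _ = g ≫ (inl ≫ fst) := by simp
      _ = g := by rw [hif]; simp
  · intro A B C s t hs ht hst
    have hst0 : s ≫ t = 0 := by
      ext x
      exact hst.apply_apply_eq_zero x
    have lift : ∀ h : P ⟶ C, ∃ hb : P ⟶ B, hb ≫ t = h := by
      intro h
      haveI : Epi t := (ModuleCat.epi_iff_surjective t).2 ht
      exact ⟨Projective.factorThru h t, Projective.factorThru_comp h t⟩
    have factor : ∀ (g : P ⟶ B), g ≫ t = 0 → ∃ u : P ⟶ A, u ≫ s = g := by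
      intro g hg
      obtain ⟨u, hu⟩ := Stmt6Aux.exists_factor s t hs hst g
        (fun x => by
          have : (g ≫ t) x = (0 : P ⟶ C) x := by rw [hg]
          simpa using this)
      exact ⟨u, by ext x; exact hu x⟩
    have hcancel : ∀ (a b : P ⟶ A), a ≫ s = b ≫ s → a = b := by
      intro a b hab
      ext x
      apply hs
      have := congrArg (fun (k : P ⟶ B) => k x) hab
      simpa using this
    refine ⟨?_, ?_, ?_⟩
    · -- E A, E B ⇒ E C
      intro hA hB
      rw [key] at hA hB ⊢
      intro g hg
      obtain ⟨gt, hgt⟩ := lift g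
      obtain ⟨u, hu⟩ := factor (f ≫ gt) (by rw [Category.assoc, hgt]; exact hg)
      obtain ⟨v, hv⟩ := hA u (by
        refine hcancel _ 0 ?_
        rw [Category.assoc, hu, ← Category.assoc, hff0]
        simp)
      obtain ⟨h, hh⟩ := hB (gt - v ≫ s) (by
        rw [Preadditive.comp_sub, ← Category.assoc, hv, hu]
        simp)
      refine ⟨h ≫ t, ?_⟩
      rw [← Category.assoc, hh, Preadditive.sub_comp, hgt, Category.assoc, hst0]
      simp
    · -- E A, E C ⇒ E B
      intro hA hC
      rw [key] at hA hC ⊢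
      intro g hg
      obtain ⟨h1, hh1⟩ := hC (g ≫ t) (by rw [← Category.assoc, hg]; simp)
      obtain ⟨h2, hh2⟩ := lift h1
      obtain ⟨u, hu⟩ := factor (g - f ≫ h2) (by
        rw [Preadditive.sub_comp, Category.assoc, hh2, hh1]; simp)
      obtain ⟨v, hv⟩ := hA u (by
        refine hcancel _ 0 ?_
        rw [Category.assoc, hu, Preadditive.comp_sub, hg, ← Category.assoc, hff0]
        simp)
      refine ⟨v ≫ s + h2, ?_⟩
      rw [Preadditive.comp_add, ← Category.assoc, hv, hu]
      simp
    · -- E B, E C ⇒ E A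
      intro hB hC
      rw [key] at hB hC ⊢
      intro g hg
      obtain ⟨h, hh⟩ := hB (g ≫ s) (by rw [← Category.assoc, hg]; simp)
      obtain ⟨w, hw⟩ := hC (h ≫ t) (by
        rw [← Category.assoc, hh, Category.assoc, hst0]; simp)
      obtain ⟨wt, hwt⟩ := lift w
      obtain ⟨u, hu⟩ := factor (h - f ≫ wt) (by
        rw [Preadditive.sub_comp, Category.assoc, hwt, hw]; simp)
      refine ⟨u, ?_⟩
      refine hcancel _ _ ?_
      rw [Category.assoc, hu, Preadditive.comp_sub, hh, ← Category.assoc f f wt, hff0]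
      simp
end

section
/- Let R be a ring and N a strongly Gorenstein projective R-module which is not projective. Then the complete hereditary cotorsion pair (^⊥(N^⊥), N^⊥) has kernel equal to Add R (the class of projective modules), but N^⊥ is not a tilting class (since any module generating a tilting class has finite projective dimension, which would force N projective). -/
open CategoryTheory Opposite

/-! ### Auxiliary machinery -/

noncomputable section Aux

open CategoryTheory Opposite Limits

namespace Stmt13Aux

lemma subsingleton_of_iso {S : Type} [Ring S] {M N : ModuleCat.{0} S} (e : M ≅ N)
    (h : Subsingleton N) : Subsingleton M := by
  constructor
  intro a b
  have h1 : ∀ x : M, e.inv (e.hom x) = x := fun x => by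
    have := e.hom_inv_id
    calc e.inv (e.hom x) = (e.hom ≫ e.inv) x := rfl
    _ = x := by rw [this]; rfl
  rw [← h1 a, ← h1 b, Subsingleton.elim (e.hom a) (e.hom b)]

lemma subsingleton_of_isZero {S : Type} [Ring S] {M : ModuleCat.{0} S} (h : IsZero M) :
    Subsingleton M := by
  constructor
  intro a b
  have h0 : (𝟙 M : M ⟶ M) = 0 := h.eq_of_src _ _
  have ha : a = (0 : M ⟶ M) a := by rw [← h0]; rfl
  have hb : b = (0 : M ⟶ M) b := by rw [← h0]; rfl
  rw [ha, hb]; rfl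

variable {R : Type} [Ring R]

lemma cancel_inj {A B C : ModuleCat.{0} R} (k : B ⟶ C) (hk : Function.Injective k)
    {u v : A ⟶ B} (h : u ≫ k = v ≫ k) : u = v := by
  ext x
  apply hk
  exact congrArg (fun (w : A ⟶ C) => w x) h

lemma fac_mono {A B K : ModuleCat.{0} R} (k : K ⟶ B) (hk : Function.Injective k)
    (g : A ⟶ B) (h : ∀ a, ∃ y, k y = g a) : ∃ u : A ⟶ K, u ≫ k = g := by
  have hmem : ∀ a, g a ∈ LinearMap.range k.hom := fun a => (h a).imp (fun y hy => hy)
  let e := LinearEquiv.ofInjective k.hom hk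
  refine ⟨ModuleCat.ofHom (e.symm.toLinearMap.comp (g.hom.codRestrict (LinearMap.range k.hom) hmem)), ?_⟩
  ext a
  show k (e.symm ⟨g a, hmem a⟩) = g a
  have h2 : k (e.symm ⟨g a, hmem a⟩) = (e (e.symm ⟨g a, hmem a⟩) : B) := rfl
  rw [h2, e.apply_symm_apply]

lemma fac_epi {A B Q : ModuleCat.{0} R} (p : A ⟶ Q) (hp : Function.Surjective p)
    (g : A ⟶ B) (h : ∀ x, p x = 0 → g x = 0) : ∃ u : Q ⟶ B, p ≫ u = g := by
  have key : ∀ x y : A, p x = p y → g x = g y := by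
    intro x y hxy
    have h0 : g (x - y) = 0 := h _ (by rw [map_sub, hxy, sub_self])
    rw [map_sub, sub_eq_zero] at h0; exact h0
  refine ⟨ModuleCat.ofHom <|
          { toFun := fun q => g (hp q).choose
            map_add' := fun q1 q2 => by
              rw [← map_add]
              exact key _ _ (by rw [map_add, (hp q1).choose_spec, (hp q2).choose_spec,
                (hp (q1+q2)).choose_spec])
            map_smul' := fun c q => by
              rw [RingHom.id_apply, ← map_smul]
              exact key _ _ (by rw [map_smul, (hp q).choose_spec, (hp (c • q)).choose_spec]) },
    ?_⟩
  ext a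
  exact key _ _ ((hp (p a)).choose_spec)

/-- The fundamental computation: `Ext^{n+1}` vanishing via a projective resolution. -/
lemma extVanish_iff_res {M Y : ModuleCat.{0} R} (PR : ProjectiveResolution M) (n : ℕ) :
    extVanish R (n+1) M Y ↔
      ∀ φ : PR.complex.X (n+1) ⟶ Y, PR.complex.d (n+2) (n+1) ≫ φ = 0 →
        ∃ ψ : PR.complex.X n ⟶ Y, PR.complex.d (n+1) n ≫ ψ = φ := by
  show Subsingleton (((Ext ℤ (ModuleCat.{0} R) (n+1)).obj (op M)).obj Y) ↔ _
  have e := PR.isoExt (R := ℤ) (n+1) Y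
  set L := PR.complex.linearYonedaObj ℤ Y with hL
  have h1 : Subsingleton (((Ext ℤ (ModuleCat.{0} R) (n+1)).obj (op M)).obj Y) ↔
      Subsingleton (L.homology (n+1)) :=
    ⟨fun h => subsingleton_of_iso e.symm h, fun h => subsingleton_of_iso e h⟩
  rw [h1]
  have h2 : Subsingleton (L.homology (n+1)) ↔ L.ExactAt (n+1) := by
    rw [HomologicalComplex.exactAt_iff_isZero_homology]
    exact ⟨fun h => @ModuleCat.isZero_of_subsingleton _ _ _ h, fun h => subsingleton_of_isZero h⟩
  rw [h2, HomologicalComplex.exactAt_iff' L n (n+1) (n+2) (by simp) (by simp),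
    ShortComplex.moduleCat_exact_iff]
  have hg : ∀ x : PR.complex.X (n+1) ⟶ Y,
      (HomologicalComplex.sc' L n (n + 1) (n + 2)).g x = PR.complex.d (n + 2) (n + 1) ≫ x :=
    fun x => rfl
  have hf : ∀ x : PR.complex.X n ⟶ Y,
      (HomologicalComplex.sc' L n (n + 1) (n + 2)).f x = PR.complex.d (n + 1) n ≫ x :=
    fun x => rfl
  constructor
  · intro h φ hφ
    obtain ⟨ψ, hψ⟩ := h φ (by rw [hg]; exact hφ)
    exact ⟨ψ, (hf ψ).symm.trans hψ⟩
  · intro h x hx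
    obtain ⟨ψ, hψ⟩ := h x ((hg x).symm.trans hx)
    exact ⟨ψ, by rw [hf]; exact hψ⟩

/-- Vanishing of `Ext^{n+1}(M, I)` for `I` injective. -/
lemma extVanish_of_injective (M I : ModuleCat.{0} R) (hI : Injective I) (n : ℕ) :
    extVanish R (n+1) M I := by
  classical
  have : EnoughProjectives (ModuleCat.{0} R) := inferInstance
  set PR := ProjectiveResolution.of M with hPR
  rw [extVanish_iff_res PR n]
  intro φ hφ
  have hex := PR.complex_exactAt_succ n
  rw [HomologicalComplex.exactAt_iff' _ (n+2) (n+1) n (by simp) (by simp),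
    ShortComplex.moduleCat_exact_iff] at hex
  -- factor φ through the range of d (n+1) n
  set d := PR.complex.d (n+1) n with hd
  set rg := LinearMap.range d.hom with hrg
  set Rg : ModuleCat.{0} R := ModuleCat.of R ↥rg with hRg
  set p : PR.complex.X (n+1) ⟶ Rg := ModuleCat.ofHom (LinearMap.codRestrict rg d.hom (fun x => ⟨x, rfl⟩)) with hp
  have hpsurj : Function.Surjective p := by
    rintro ⟨y, x, hx⟩
    exact ⟨x, Subtype.ext hx⟩
  have h0 : ∀ x, p x = 0 → φ x = 0 := by
    intro x hx
    have hdx : d x = 0 := congrArg Subtype.val hx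
    obtain ⟨y, hy⟩ := hex x hdx
    have : φ (PR.complex.d (n+2) (n+1) y) = (PR.complex.d (n+2) (n+1) ≫ φ) y := rfl
    rw [show x = PR.complex.d (n+2) (n+1) y from hy.symm, this, hφ]
    rfl
  obtain ⟨w, hw⟩ := fac_epi p hpsurj φ h0
  set j : Rg ⟶ PR.complex.X n := ModuleCat.ofHom rg.subtype with hj
  haveI : Mono j := (ModuleCat.mono_iff_injective j).mpr (Submodule.injective_subtype rg)
  haveI := hI
  refine ⟨Injective.factorThru w j, ?_⟩
  have h1 : p ≫ j = d := by ext x; rfl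
  calc PR.complex.d (n+1) n ≫ Injective.factorThru w j
      = (p ≫ j) ≫ Injective.factorThru w j := by rw [h1]
    _ = p ≫ (j ≫ Injective.factorThru w j) := by rw [Category.assoc]
    _ = p ≫ w := by rw [Injective.comp_factorThru]
    _ = φ := hw

variable {A I B M : ModuleCat.{0} R}

lemma a_comp_q (a : A ⟶ I) (q : I ⟶ B) (haq : Function.Exact a q) : a ≫ q = 0 := by
  ext x
  show q (a x) = 0
  exact (haq (a x)).mpr ⟨x, rfl⟩

/-- Dimension shifting, downwards. -/
lemma shift_down (a : A ⟶ I) (q : I ⟶ B) (ha : Function.Injective a)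
    (hq : Function.Surjective q) (haq : Function.Exact a q) (hI : Injective I)
    (n : ℕ) (hA : extVanish R (n+2) M A) : extVanish R (n+1) M B := by
  classical
  set PR := ProjectiveResolution.of M with hPR
  rw [extVanish_iff_res PR (n+1)] at hA
  rw [extVanish_iff_res PR n]
  intro φ hφ
  haveI : Epi q := (ModuleCat.epi_iff_surjective q).mpr hq
  haveI : Projective (PR.complex.X (n+1)) := PR.projective (n+1)
  haveI : Projective (PR.complex.X n) := PR.projective n
  set φt := Projective.factorThru φ q with hφt
  have hφtq : φt ≫ q = φ := Projective.factorThru_comp φ q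
  have hrange : ∀ x, ∃ y, a y = (PR.complex.d (n+2) (n+1) ≫ φt) x := by
    intro x
    have h1 : q ((PR.complex.d (n+2) (n+1) ≫ φt) x) = 0 := by
      have h2 : ((PR.complex.d (n+2) (n+1) ≫ φt) ≫ q) x = ((0 : _ ⟶ B)) x := by
        rw [Category.assoc, hφtq, hφ]
      exact h2
    exact (haq _).mp h1
  obtain ⟨α, hα⟩ := fac_mono a ha _ hrange
  have hαcoc : PR.complex.d (n+3) (n+2) ≫ α = 0 := by
    apply cancel_inj a ha
    rw [Category.assoc, hα, Limits.zero_comp, ← Category.assoc,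
      HomologicalComplex.d_comp_d, Limits.zero_comp]
  obtain ⟨β, hβ⟩ := hA α hαcoc
  set φt' := φt - β ≫ a with hφt'
  have hcoc' : PR.complex.d (n+2) (n+1) ≫ φt' = 0 := by
    rw [hφt', Preadditive.comp_sub, ← Category.assoc, hβ, hα, sub_self]
  have hIvan := extVanish_of_injective (R := R) M I hI n
  rw [extVanish_iff_res PR n] at hIvan
  obtain ⟨γ, hγ⟩ := hIvan φt' hcoc'
  refine ⟨γ ≫ q, ?_⟩
  rw [← Category.assoc, hγ, hφt', Preadditive.sub_comp, Category.assoc,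
    a_comp_q a q haq, Limits.comp_zero, sub_zero, hφtq]

/-- Dimension shifting, upwards. -/
lemma shift_up (a : A ⟶ I) (q : I ⟶ B) (ha : Function.Injective a)
    (hq : Function.Surjective q) (haq : Function.Exact a q) (hI : Injective I)
    (n : ℕ) (hB : extVanish R (n+1) M B) : extVanish R (n+2) M A := by
  classical
  set PR := ProjectiveResolution.of M with hPR
  rw [extVanish_iff_res PR n] at hB
  rw [extVanish_iff_res PR (n+1)]
  intro α hα
  haveI : Epi q := (ModuleCat.epi_iff_surjective q).mpr hq
  haveI : Projective (PR.complex.X n) := PR.projective n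
  have hIvan := extVanish_of_injective (R := R) M I hI (n+1)
  rw [extVanish_iff_res PR (n+1)] at hIvan
  have hcoc : PR.complex.d (n+3) (n+2) ≫ (α ≫ a) = 0 := by
    rw [← Category.assoc, hα, Limits.zero_comp]
  obtain ⟨γ, hγ⟩ := hIvan (α ≫ a) hcoc
  have hγq : PR.complex.d (n+2) (n+1) ≫ (γ ≫ q) = 0 := by
    rw [← Category.assoc, hγ, Category.assoc, a_comp_q a q haq, Limits.comp_zero]
  obtain ⟨δ, hδ⟩ := hB (γ ≫ q) hγq
  set δt := Projective.factorThru δ q with hδt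
  have hδtq : δt ≫ q = δ := Projective.factorThru_comp δ q
  set γ' := γ - PR.complex.d (n+1) n ≫ δt with hγ'
  have hγ'q : γ' ≫ q = 0 := by
    rw [hγ', Preadditive.sub_comp, Category.assoc, hδtq, hδ, sub_self]
  have hrange : ∀ x, ∃ y, a y = γ' x := by
    intro x
    have h1 : q (γ' x) = 0 := congrArg (fun (w : PR.complex.X (n+1) ⟶ B) => w x) hγ'q
    exact (haq _).mp h1
  obtain ⟨ε, hε⟩ := fac_mono a ha γ' hrange
  refine ⟨ε, ?_⟩
  apply cancel_inj a ha
  rw [Category.assoc, hε, hγ', Preadditive.comp_sub, ← Category.assoc,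
    HomologicalComplex.d_comp_d, Limits.zero_comp, sub_zero, hγ]

/-- if `Ext^1(X, K) = 0` then any short exact sequence `0 → K → F → X → 0` splits. -/
lemma splitting {K F X : ModuleCat.{0} R} (k : K ⟶ F) (g : F ⟶ X)
    (hk : Function.Injective k) (hg : Function.Surjective g) (hkg : Function.Exact k g)
    (hv : extVanish R 1 X K) : ∃ s : X ⟶ F, s ≫ g = 𝟙 X := by
  classical
  set PR := ProjectiveResolution.of X with hPR
  rw [extVanish_iff_res PR 0] at hv
  haveI : Epi g := (ModuleCat.epi_iff_surjective g).mpr hg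
  haveI : Projective (PR.complex.X 0) := PR.projective 0
  set πX : PR.complex.X 0 ⟶ X := PR.π.f 0 with hπX
  have hπXsurj : Function.Surjective πX := by
    haveI h : Epi (PR.π.f 0) := inferInstance
    exact (ModuleCat.epi_iff_surjective πX).mp h
  have hexact0 := PR.exact₀
  rw [ShortComplex.moduleCat_exact_iff] at hexact0
  set u := Projective.factorThru πX g with hu
  have hug : u ≫ g = πX := Projective.factorThru_comp πX g
  have hdπ : PR.complex.d 1 0 ≫ πX = 0 := PR.complex_d_comp_π_f_zero
  have hrange : ∀ x, ∃ y, k y = (PR.complex.d 1 0 ≫ u) x := by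
    intro x
    have h1 : ((PR.complex.d 1 0 ≫ u) ≫ g) x = ((0 : _ ⟶ X)) x := by
      rw [Category.assoc, hug, hdπ]
    exact (hkg _).mp h1
  obtain ⟨c, hc⟩ := fac_mono k hk _ hrange
  have hccoc : PR.complex.d 2 1 ≫ c = 0 := by
    apply cancel_inj k hk
    rw [Category.assoc, hc, Limits.zero_comp, ← Category.assoc,
      HomologicalComplex.d_comp_d, Limits.zero_comp]
  obtain ⟨ψ, hψ⟩ := hv c hccoc
  set u' := u - ψ ≫ k with hu'
  have hdu' : PR.complex.d 1 0 ≫ u' = 0 := by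
    rw [hu', Preadditive.comp_sub, ← Category.assoc, hψ, hc, sub_self]
  have hker : ∀ x, πX x = 0 → u' x = 0 := by
    intro x hx
    obtain ⟨y, hy⟩ := hexact0 x hx
    have h2 : u' ((PR.complex.d 1 0) y) = (PR.complex.d 1 0 ≫ u') y := rfl
    rw [show x = (PR.complex.d 1 0) y from hy.symm, h2, hdu']
    rfl
  obtain ⟨s, hs⟩ := fac_epi πX hπXsurj u' hker
  refine ⟨s, ?_⟩
  have h3 : πX ≫ (s ≫ g) = πX ≫ 𝟙 X := by
    rw [← Category.assoc, hs, hu', Preadditive.sub_comp, Category.assoc,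
      a_comp_q k g hkg, Limits.comp_zero, sub_zero, hug, Category.comp_id]
  ext x
  obtain ⟨y, hy⟩ := hπXsurj x
  have h4 := congrArg (fun (w : PR.complex.X 0 ⟶ X) => w y) h3
  simp only [← hy]
  exact h4

section SGP

variable {N P : ModuleCat.{0} R} (f : P ⟶ P) (ι : N ⟶ P)

lemma f_comp_f (hff : Function.Exact f f) : f ≫ f = 0 := by
  ext x
  show f (f x) = (0 : P ⟶ P) x
  show f (f x) = 0
  exact (hff (f x)).mpr ⟨x, rfl⟩

def sgpComplex (hff : Function.Exact f f) : ChainComplex (ModuleCat.{0} R) ℕ :=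
  ChainComplex.of (fun _ => P) (fun _ => f) (fun _ => f_comp_f f hff)

variable (hff : Function.Exact f f) (hι : Function.Injective ι) (hιf : Function.Exact ι f)

def sgpPi : P ⟶ N :=
  ModuleCat.ofHom ((LinearEquiv.ofInjective ι.hom hι).symm.toLinearMap.comp
    (LinearMap.codRestrict (LinearMap.range ι.hom) f.hom
      (fun x => by
        obtain ⟨y, hy⟩ := (hιf (f x)).mp ((hff (f x)).mpr ⟨x, rfl⟩)
        exact ⟨y, hy⟩)))

lemma iota_sgpPi (x : P) : ι (sgpPi f ι hff hι hιf x) = f x := by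
  set e := LinearEquiv.ofInjective ι.hom hι with he
  have key : ∀ z : LinearMap.range ι.hom, ι.hom (e.symm z) = (z : P) := by
    intro z
    have h1 : ι.hom (e.symm z) = (e (e.symm z) : P) := rfl
    rw [h1, e.apply_symm_apply]
  exact key _

lemma sgpPi_surjective : Function.Surjective (sgpPi f ι hff hι hιf) := by
  intro nn
  have h1 : f (ι nn) = 0 := (hιf (ι nn)).mpr ⟨nn, rfl⟩
  obtain ⟨x, hx⟩ := (hff (ι nn)).mp h1
  refine ⟨x, hι ?_⟩
  rw [iota_sgpPi f ι hff hι hιf, hx]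

lemma sgpPi_ker {x : P} (hx : sgpPi f ι hff hι hιf x = 0) : ∃ y, f y = x := by
  have h1 : f x = 0 := by rw [← iota_sgpPi f ι hff hι hιf, hx, map_zero]
  exact (hff x).mp h1

lemma f_sgpPi (x : P) : sgpPi f ι hff hι hιf (f x) = 0 := by
  apply hι
  rw [iota_sgpPi f ι hff hι hιf, map_zero]
  exact (hff (f x)).mpr ⟨x, rfl⟩

end SGP

section SGPRes
variable {N P : ModuleCat.{0} R} (f : P ⟶ P) (ι : N ⟶ P) (hP : Projective P)
  (hff : Function.Exact f f) (hι : Function.Injective ι) (hιf : Function.Exact ι f)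

lemma sgp_d_pi : (sgpComplex f hff).d 1 0 ≫ sgpPi f ι hff hι hιf = 0 := by
  rw [show (sgpComplex f hff).d 1 0 = f by unfold sgpComplex; exact ChainComplex.of_d (fun _ => P) (fun _ => f) 0]
  ext x
  exact f_sgpPi f ι hff hι hιf x

def sgpRes : ProjectiveResolution N where
  complex := sgpComplex f hff
  projective n := hP
  π := (ChainComplex.toSingle₀Equiv _ _).symm ⟨sgpPi f ι hff hι hιf, sgp_d_pi f ι hff hι hιf⟩
  quasiIso := ⟨fun n => by
    have hπ0 : ((ChainComplex.toSingle₀Equiv (sgpComplex f hff) N).symm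
        ⟨sgpPi f ι hff hι hιf, sgp_d_pi f ι hff hι hιf⟩).f 0 = sgpPi f ι hff hι hιf :=
      ChainComplex.toSingle₀Equiv_symm_apply_f_zero _ _
    cases n with
    | zero =>
      rw [ChainComplex.quasiIsoAt₀_iff, ShortComplex.quasiIso_iff_of_zeros']
      rotate_left
      · rfl
      · rfl
      · rfl
      constructor
      · rw [ShortComplex.moduleCat_exact_iff]
        intro x hx
        have hx' : sgpPi f ι hff hι hιf x = 0 := by rw [← hπ0]; exact hx
        obtain ⟨y, hy⟩ := sgpPi_ker f ι hff hι hιf hx'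
        refine ⟨y, ?_⟩
        show ((sgpComplex f hff).d 1 0) y = x
        rw [show (sgpComplex f hff).d 1 0 = f by unfold sgpComplex; exact ChainComplex.of_d (fun _ => P) (fun _ => f) 0]
        exact hy
      · have : Epi (((ChainComplex.toSingle₀Equiv (sgpComplex f hff) N).symm
            ⟨sgpPi f ι hff hι hιf, sgp_d_pi f ι hff hι hιf⟩).f 0) := by
          rw [ModuleCat.epi_iff_surjective]
          intro y
          have := sgpPi_surjective f ι hff hι hιf y
          obtain ⟨x, hx⟩ := this
          exact ⟨x, by rw [hπ0]; exact hx⟩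
        exact this
    | succ n =>
      rw [quasiIsoAt_iff_exactAt']
      · rw [HomologicalComplex.exactAt_iff' _ (n+2) (n+1) n (by simp) (by simp),
          ShortComplex.moduleCat_exact_iff]
        intro (x : P) hx
        have hx2 : ((sgpComplex f hff).d (n+1) n) x = 0 := hx
        rw [show (sgpComplex f hff).d (n+1) n = f from ChainComplex.of_d (fun _ => P) (fun _ => f) n] at hx2
        obtain ⟨y, hy⟩ := (hff x).mp hx2
        refine ⟨y, ?_⟩
        show ((sgpComplex f hff).d (n+2) (n+1)) y = x
        rw [show (sgpComplex f hff).d (n+2) (n+1) = f from ChainComplex.of_d (fun _ => P) (fun _ => f) (n+1)]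
        exact hy
      · apply ChainComplex.exactAt_succ_single_obj⟩

end SGPRes


section SGP2
variable {N P : ModuleCat.{0} R} (f : P ⟶ P) (ι : N ⟶ P) (hP : Projective P)
  (hff : Function.Exact f f) (hι : Function.Injective ι) (hιf : Function.Exact ι f)

include f ι hP hff hι hιf

/-- Vanishing criterion for the strongly Gorenstein projective module `N`. -/
lemma sgp_vanish_iff (Y : ModuleCat.{0} R) (n : ℕ) :
    extVanish R (n+1) N Y ↔ ∀ φ : P ⟶ Y, f ≫ φ = 0 → ∃ ψ : P ⟶ Y, f ≫ ψ = φ := by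
  rw [extVanish_iff_res (sgpRes f ι hP hff hι hιf) n]
  have hX : ∀ m : ℕ, (sgpRes f ι hP hff hι hιf).complex.X m = P := fun m => rfl
  constructor
  · intro h φ hφ
    obtain ⟨ψ, hψ⟩ := h φ (by
      show (sgpComplex f hff).d (n+2) (n+1) ≫ φ = 0
      rw [show (sgpComplex f hff).d (n+2) (n+1) = f from ChainComplex.of_d (fun _ => P) (fun _ => f) (n+1)]
      exact hφ)
    refine ⟨ψ, ?_⟩
    have h2 : (sgpComplex f hff).d (n+1) n ≫ ψ = φ := hψ
    rw [show (sgpComplex f hff).d (n+1) n = f from ChainComplex.of_d (fun _ => P) (fun _ => f) n] at h2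
    exact h2
  · intro h φ hφ
    have hφ' : f ≫ φ = 0 := by
      have h2 : (sgpComplex f hff).d (n+2) (n+1) ≫ φ = 0 := hφ
      rw [show (sgpComplex f hff).d (n+2) (n+1) = f from ChainComplex.of_d (fun _ => P) (fun _ => f) (n+1)] at h2
      exact h2
    obtain ⟨ψ, hψ⟩ := h φ hφ'
    refine ⟨ψ, ?_⟩
    show (sgpComplex f hff).d (n+1) n ≫ ψ = φ
    rw [show (sgpComplex f hff).d (n+1) n = f from ChainComplex.of_d (fun _ => P) (fun _ => f) n]
    exact hψ

lemma sgp_periodic (Y : ModuleCat.{0} R) {i j : ℕ} (hi : 1 ≤ i) (hj : 1 ≤ j)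
    (h : extVanish R i N Y) : extVanish R j N Y := by
  obtain ⟨a, rfl⟩ := Nat.exists_eq_add_of_le hi
  obtain ⟨b, rfl⟩ := Nat.exists_eq_add_of_le hj
  rw [show 1 + a = a + 1 from Nat.add_comm 1 a] at h
  rw [show 1 + b = b + 1 from Nat.add_comm 1 b]
  rw [sgp_vanish_iff f ι hP hff hι hιf Y b]
  rw [sgp_vanish_iff f ι hP hff hι hιf Y a] at h
  exact h

lemma sgp_vanish_proj (Q : ModuleCat.{0} R) (hQ : Projective Q)
    (hhom : Function.Exact (fun φ : P ⟶ Q => f ≫ φ) (fun φ : P ⟶ Q => f ≫ φ))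
    (n : ℕ) : extVanish R (n+1) N Q := by
  rw [sgp_vanish_iff f ι hP hff hι hιf Q n]
  intro φ hφ
  exact (hhom φ).mp hφ

/-- If `Ext^1(N, F) = 0`, `Ext^1(N, X) = 0` and `0 → K → F → X → 0` is exact,
then `Ext^1(N, K) = 0`. -/
lemma sgp_perp_ker {K F X : ModuleCat.{0} R} (k : K ⟶ F) (g : F ⟶ X)
    (hk : Function.Injective k) (hg : Function.Surjective g) (hkg : Function.Exact k g)
    (hF : extVanish R 1 N F) (hX : extVanish R 1 N X) : extVanish R 1 N K := by
  rw [sgp_vanish_iff f ι hP hff hι hιf K 0]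
  rw [sgp_vanish_iff f ι hP hff hι hιf F 0] at hF
  rw [sgp_vanish_iff f ι hP hff hι hιf X 0] at hX
  intro φ hφ
  haveI : Epi g := (ModuleCat.epi_iff_surjective g).mpr hg
  haveI := hP
  obtain ⟨ψ', hψ'⟩ := hF (φ ≫ k) (by rw [← Category.assoc, hφ, Limits.zero_comp])
  have hcoc : f ≫ (ψ' ≫ g) = 0 := by
    rw [← Category.assoc, hψ', Category.assoc, a_comp_q k g hkg, Limits.comp_zero]
  obtain ⟨χ, hχ⟩ := hX (ψ' ≫ g) hcoc
  set χt := Projective.factorThru χ g with hχt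
  have hχtg : χt ≫ g = χ := Projective.factorThru_comp χ g
  set ψ'' := ψ' - f ≫ χt with hψ''
  have hψ''g : ψ'' ≫ g = 0 := by
    rw [hψ'', Preadditive.sub_comp, Category.assoc, hχtg, hχ, sub_self]
  have hrange : ∀ x, ∃ y, k y = ψ'' x := by
    intro x
    have h1 : g (ψ'' x) = 0 := congrArg (fun (w : P ⟶ X) => w x) hψ''g
    exact (hkg _).mp h1
  obtain ⟨τ, hτ⟩ := fac_mono k hk ψ'' hrange
  refine ⟨τ, ?_⟩
  apply cancel_inj k hk
  rw [Category.assoc, hτ, hψ'', Preadditive.comp_sub, ← Category.assoc,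
    f_comp_f f hff, Limits.zero_comp, sub_zero, hψ']

end SGP2

section Retract

lemma extVanish_retract_left {X X' Y : ModuleCat.{0} R} (i : X ⟶ X') (r : X' ⟶ X)
    (hir : i ≫ r = 𝟙 X) (n : ℕ) (h : extVanish R n X' Y) : extVanish R n X Y := by
  show Subsingleton (((Ext ℤ (ModuleCat.{0} R) n).obj (op X)).obj Y)
  have h' : Subsingleton (((Ext ℤ (ModuleCat.{0} R) n).obj (op X')).obj Y) := h
  set E := Ext ℤ (ModuleCat.{0} R) n with hE
  set t1 := ((E.map i.op).app Y) with ht1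
  set t2 := ((E.map r.op).app Y) with ht2
  constructor
  intro x y
  have key : t2 ≫ t1 = 𝟙 _ := by
    rw [ht1, ht2, ← NatTrans.comp_app, ← E.map_comp, ← op_comp, hir, op_id, E.map_id]
    rfl
  have hx : t1 (t2 x) = x := by
    have := congrArg (fun (w : (E.obj (op X)).obj Y ⟶ (E.obj (op X)).obj Y) => w x) key
    exact this
  have hy : t1 (t2 y) = y := by
    have := congrArg (fun (w : (E.obj (op X)).obj Y ⟶ (E.obj (op X)).obj Y) => w y) key
    exact this
  rw [← hx, ← hy, Subsingleton.elim (t2 x) (t2 y)]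

lemma projective_of_retract {X X' : ModuleCat.{0} R} (i : X ⟶ X') (r : X' ⟶ X)
    (hir : i ≫ r = 𝟙 X) (hX' : Projective X') : Projective X := by
  constructor
  intro E Z g e he
  haveI := hX'
  haveI := he
  exact ⟨i ≫ Projective.factorThru (r ≫ g) e, by
    rw [Category.assoc, Projective.factorThru_comp, ← Category.assoc, hir, Category.id_comp]⟩

end Retract

end Stmt13Aux

end Aux

theorem stmt13 (R : Type) [Ring R] (N : ModuleCat.{0} R)
    (hN : IsStronglyGorensteinProjective R N) (hnp : ¬ Projective N) :
    leftPerp R {X : ModuleCat.{0} R | extVanish R 1 N X} ∩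
        {X : ModuleCat.{0} R | extVanish R 1 N X} =
      AddClass R (ModuleCat.of R R) ∧
    ¬ ∃ T : ModuleCat.{0} R, IsTilting R T ∧
        {X : ModuleCat.{0} R | extVanish R 1 N X} = perpInf R T := by
  classical
  open Stmt13Aux CategoryTheory Opposite in
  obtain ⟨P, hP, f, hff, hhom, ι, hι, hιf⟩ := hN
  constructor
  · -- Part 1 : the kernel of the cotorsion pair is the class of projectives
    ext X
    simp only [Set.mem_inter_iff, Set.mem_setOf_eq, leftPerp, AddClass]
    constructor
    · rintro ⟨hleft, hXN⟩
      -- build a free cover of X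
      set F : ModuleCat.{0} R := ModuleCat.of R ((↥X) →₀ R) with hF
      set g : F ⟶ X := ModuleCat.ofHom (Finsupp.linearCombination R (id : ↥X → ↥X)) with hg
      have hgsurj : Function.Surjective g := by
        intro x
        refine ⟨Finsupp.single x 1, ?_⟩
        show (Finsupp.linearCombination R (id : ↥X → ↥X)) (Finsupp.single x 1) = x
        rw [Finsupp.linearCombination_single, one_smul]
        rfl
      set K : ModuleCat.{0} R := ModuleCat.of R ↥(LinearMap.ker g.hom) with hK
      set k : K ⟶ F := ModuleCat.ofHom (LinearMap.ker g.hom).subtype with hk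
      have hkinj : Function.Injective k := Submodule.injective_subtype _
      have hkg : Function.Exact k g := by
        intro y
        constructor
        · intro h
          exact ⟨⟨y, h⟩, rfl⟩
        · rintro ⟨x, rfl⟩
          exact x.2
      have hFproj : Projective F := ModuleCat.projective_of_free
        (Finsupp.basisSingleOne : Module.Basis (↥X) R ((↥X) →₀ R))
      have hFv : extVanish R 1 N F :=
        sgp_vanish_proj f ι hP hff hι hιf F hFproj (hhom F hFproj) 0
      have hKv : extVanish R 1 N K :=
        sgp_perp_ker f ι hP hff hι hιf k g hkinj hgsurj hkg hFv hXN
      have hXK : extVanish R 1 X K := hleft K hKv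
      obtain ⟨s, hs⟩ := splitting k g hkinj hgsurj hkg hXK
      refine ⟨↥X, K, ⟨?_⟩⟩
      -- the splitting gives `X × K ≅ F`
      have hgs : ∀ x : ↥X, g (s x) = x := by
        intro x
        have := congrArg (fun (w : X ⟶ X) => w x) hs
        exact this
      refine LinearEquiv.toModuleIso (LinearEquiv.ofBijective
        (LinearMap.coprod s.hom k.hom) ⟨?_, ?_⟩)
      · rintro ⟨x1, k1⟩ ⟨x2, k2⟩ h
        have h' : s x1 + k k1 = s x2 + k k2 := h
        have hx : x1 = x2 := by
          have := congrArg g h'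
          rwa [map_add, map_add, hgs, hgs, (hkg (k k1)).mpr ⟨k1, rfl⟩,
            (hkg (k k2)).mpr ⟨k2, rfl⟩, add_zero, add_zero] at this
        have hkk : k k1 = k k2 := by
          rw [hx] at h'
          exact add_left_cancel h'
        have : k1 = k2 := hkinj hkk
        rw [hx, this]
      · intro y
        have hmem : g (y - s (g y)) = 0 := by
          rw [map_sub, hgs, sub_self]
        refine ⟨⟨g y, ⟨y - s (g y), hmem⟩⟩, ?_⟩
        show s (g y) + (y - s (g y)) = y
        abel
    · rintro ⟨κ, Y, ⟨e⟩⟩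
      -- X is a retract of a free module, hence projective
      have hfree : Projective (ModuleCat.of R (κ →₀ ↥(ModuleCat.of R R))) :=
        ModuleCat.projective_of_free
          (Finsupp.basisSingleOne : Module.Basis κ R (κ →₀ R))
      set i0 : X ⟶ ModuleCat.of R (↥X × ↥Y) := ModuleCat.ofHom (LinearMap.inl R ↥X ↥Y) with hi0
      set r0 : ModuleCat.of R (↥X × ↥Y) ⟶ X := ModuleCat.ofHom (LinearMap.fst R ↥X ↥Y) with hr0
      have hir : (i0 ≫ e.hom) ≫ (e.inv ≫ r0) = 𝟙 X := by
        rw [Category.assoc, ← Category.assoc e.hom, e.hom_inv_id, Category.id_comp]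
        ext x
        rfl
      have hXproj : Projective X := projective_of_retract _ _ hir hfree
      constructor
      · intro C _
        show Subsingleton (extMod R 1 X C)
        haveI := hXproj
        exact subsingleton_of_isZero (isZero_Ext_succ_of_projective X C 0)
      · exact sgp_vanish_proj f ι hP hff hι hιf X hXproj (hhom X hXproj) 0
  · -- Part 2 : the class is not a tilting class
    rintro ⟨T, ⟨m, hTilt⟩, hset⟩
    have hpd : pdLE R m T := hTilt.1
    -- the key induction
    have KEY : ∀ (p : ℕ) (X : ModuleCat.{0} R),
        (∀ i, 1 ≤ i → extVanish R (i + p) T X) → extVanish R (p + 1) N X := by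
      intro p
      induction p with
      | zero =>
        intro X hX
        have hmem : X ∈ perpInf R T := by
          intro i hi
          have := hX i hi
          rwa [Nat.add_zero] at this
        rw [← hset] at hmem
        exact hmem
      | succ p ih =>
        intro X hX
        set I : ModuleCat.{0} R := Injective.under X with hI
        set aι : X ⟶ I := Injective.ι X with haι
        have hainj : Function.Injective aι := by
          rw [← ModuleCat.mono_iff_injective]
          infer_instance
        have hIinj : Injective I := Injective.injective_under X
        set BB : ModuleCat.{0} R :=
          ModuleCat.of R (↥I ⧸ LinearMap.range aι.hom) with hBB
        set qq : I ⟶ BB := ModuleCat.ofHom (LinearMap.range aι.hom).mkQ with hqq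
        have hqsurj : Function.Surjective qq := Submodule.mkQ_surjective _
        have haq : Function.Exact aι qq := by
          intro y
          rw [hqq]
          show Submodule.Quotient.mk y = 0 ↔ _
          rw [Submodule.Quotient.mk_eq_zero]
          exact LinearMap.mem_range
        have hB : ∀ i, 1 ≤ i → extVanish R (i + p) T BB := by
          intro i hi
          obtain ⟨n, rfl⟩ : ∃ n, i = n + 1 := ⟨i - 1, (Nat.succ_pred_eq_of_pos hi).symm⟩
          have hX' := hX (n + 1) (by omega)
          rw [show n + 1 + (p + 1) = (n + p) + 2 by omega] at hX'
          have := shift_down aι qq hainj hqsurj haq hIinj (n + p) hX'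
          rwa [show n + p + 1 = n + 1 + p by omega] at this
        have hNB := ih BB hB
        have := shift_up aι qq hainj hqsurj haq hIinj p hNB
        rwa [show p + 1 + 1 = p + 2 by omega]
    -- every module is in `N^⊥`
    have hall : ∀ X : ModuleCat.{0} R, extVanish R 1 N X := by
      intro X
      have h1 : ∀ i, 1 ≤ i → extVanish R (i + m) T X := fun i hi => hpd X (i + m) (by omega)
      exact sgp_periodic f ι hP hff hι hιf X (by omega) (by omega) (KEY m X h1)
    -- hence the sequence 0 → N → P → P/ι(N) → 0 splits and N is projective
    set N' : ModuleCat.{0} R :=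
      ModuleCat.of R (↥P ⧸ LinearMap.range ι.hom) with hN'
    set gq : P ⟶ N' := ModuleCat.ofHom (LinearMap.range ι.hom).mkQ with hgq
    have hgqsurj : Function.Surjective gq := Submodule.mkQ_surjective _
    have hexact : Function.Exact ι gq := by
      intro y
      rw [hgq]
      show Submodule.Quotient.mk y = 0 ↔ _
      rw [Submodule.Quotient.mk_eq_zero]
      exact LinearMap.mem_range
    -- `N' ≅ N`
    have hkerpi : LinearMap.range ι.hom
        = LinearMap.ker (sgpPi f ι hff hι hιf : P ⟶ N).hom := by
      ext x
      rw [LinearMap.mem_range, LinearMap.mem_ker]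
      constructor
      · rintro ⟨nn, rfl⟩
        apply hι
        rw [iota_sgpPi f ι hff hι hιf, map_zero]
        exact (hιf (ι nn)).mpr ⟨nn, rfl⟩
      · intro h
        have hfx : f x = 0 := by
          rw [← iota_sgpPi f ι hff hι hιf x, h, map_zero]
        obtain ⟨nn, hnn⟩ := (hιf x).mp hfx
        exact ⟨nn, hnn⟩
    have eIso : N' ≅ N := LinearEquiv.toModuleIso
      ((Submodule.quotEquivOfEq _ _ hkerpi).trans
        (LinearMap.quotKerEquivOfSurjective _ (sgpPi_surjective f ι hff hι hιf)))
    have hvN' : extVanish R 1 N' N :=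
      extVanish_retract_left eIso.hom eIso.inv eIso.hom_inv_id 1 (hall N)
    obtain ⟨s, hs⟩ := splitting ι gq hι hgqsurj hexact hvN'
    have hN'proj : Projective N' := projective_of_retract s gq hs hP
    exact hnp (projective_of_retract eIso.inv eIso.hom eIso.inv_hom_id hN'proj)
end
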